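/- arXiv:2306.03391 — 6 statements merged into one kernel-verified Lean document; each statement's English description precedes it below -/
import Mathlib

section
/- The algebra of q-linearized polynomials over F_{q^{ms}} with coefficients in F_{q^m} (i.e., polynomials of the form Σ_{i=0}^{ms-1} a_i x^{q^i} with all a_i ∈ F_{q^m}, viewed as F_q-linear endomorphisms of F_{q^{ms}} under addition and composition) is isomorphic as an F_q-algebra to the algebra M_m(F_q[x]/⟨x^s−1⟩) of m×m matrices over the quotient ring F_q[x]/⟨x^s−1⟩. -/
set_option linter.unusedSectionVars false
set_option maxHeartbeats 1000000
set_option synthInstance.maxHeartbeats 400000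

open Polynomial DirectSum

namespace Stmt0Aux

universe u

section Frob

variable (Fq Fqn : Type*) [Field Fq] [Field Fqn] [Fintype Fq] [Algebra Fq Fqn]

/-- `x ↦ x ^ (card Fq) ^ k` as an `Fq`-linear endomorphism of `Fqn`. -/
noncomputable def frobL (k : ℕ) : Module.End Fq Fqn where
  toFun x := x ^ (Fintype.card Fq) ^ k
  map_add' x y := by
    have hp : (ringChar Fq).Prime := CharP.char_is_prime Fq (ringChar Fq)
    haveI : Fact (ringChar Fq).Prime := ⟨hp⟩
    haveI : CharP Fqn (ringChar Fq) :=
      charP_of_injective_algebraMap (algebraMap Fq Fqn).injective (ringChar Fq)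
    obtain ⟨n, -, hcard⟩ := FiniteField.card Fq (ringChar Fq)
    rw [hcard, ← pow_mul]
    exact add_pow_char_pow ..
  map_smul' c x := by
    rw [RingHom.id_apply]
    show (c • x) ^ (Fintype.card Fq) ^ k = c • x ^ (Fintype.card Fq) ^ k
    rw [Algebra.smul_def, Algebra.smul_def, mul_pow, ← map_pow, FiniteField.pow_card_pow]

variable {Fq Fqn}

lemma frobL_apply (k : ℕ) (x : Fqn) : frobL Fq Fqn k x = x ^ (Fintype.card Fq) ^ k := rfl

lemma frobL_pow (k j : ℕ) : (frobL Fq Fqn k) ^ j = frobL Fq Fqn (k * j) := by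
  induction j with
  | zero => ext x; simp [frobL_apply]
  | succ j ih =>
      ext x
      rw [pow_succ, Module.End.mul_apply, ih, frobL_apply, frobL_apply, frobL_apply, ← pow_mul,
        ← pow_add]
      congr 1
      ring

end Frob

section Dedekind

variable {q : ℕ} {Fq Fqn : Type*} [Field Fq] [Field Fqn] [Fintype Fq] [Fintype Fqn]
  [Algebra Fq Fqn]

lemma dedekind {n : ℕ} (hq : Fintype.card Fq = q) (hqn : Fintype.card Fqn = q ^ n)
    {r : ℕ} (t : Fin r → ℕ) (ht : ∀ i, t i < n) (hinj : Function.Injective t)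
    (c : Fin r → Fqn) (hc : ∀ x : Fqn, ∑ i, c i * x ^ q ^ (t i) = 0) : c = 0 := by
  classical
  have hq2 : 2 ≤ q := hq ▸ Fintype.one_lt_card
  set ρ : Fin r → (Fqn →* Fqn) := fun i => powMonoidHom (q ^ (t i)) with hρ
  have key : ∀ i j : Fin r, t i < t j → ρ i ≠ ρ j := by
    intro i j hlt hij
    obtain ⟨g, hg⟩ := IsCyclic.exists_generator (α := Fqnˣ)
    have horder : orderOf g = q ^ n - 1 := by
      rw [orderOf_eq_card_of_forall_mem_zpowers hg, Nat.card_eq_fintype_card,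
        Fintype.card_units, hqn]
    have hgp : g ^ (q ^ (t i)) = g ^ (q ^ (t j)) := by
      apply Units.ext
      rw [Units.val_pow_eq_pow_val, Units.val_pow_eq_pow_val]
      exact congrArg (fun f : Fqn →* Fqn => f (g : Fqn)) hij
    rw [pow_eq_pow_iff_modEq, horder] at hgp
    have hn2 : 2 ≤ n := by have := ht j; omega
    have h2 : 2 ≤ q ^ (n - 1) := Nat.one_lt_pow (by omega) (by omega)
    have e1 : q ^ n = q * q ^ (n - 1) := by
      rw [← pow_succ']; congr 1; omega
    have h3 : 2 * q ^ (n - 1) ≤ q * q ^ (n - 1) := Nat.mul_le_mul_right _ hq2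
    have hbi : q ^ (t i) ≤ q ^ (n - 1) := Nat.pow_le_pow_right (by omega) (by have := ht i; omega)
    have hbj : q ^ (t j) ≤ q ^ (n - 1) := Nat.pow_le_pow_right (by omega) (by have := ht j; omega)
    have heq : q ^ (t i) = q ^ (t j) := hgp.eq_of_lt_of_lt (by omega) (by omega)
    have : t i = t j := Nat.pow_right_injective hq2 heq
    omega
  have hρinj : Function.Injective ρ := by
    intro i j hij
    by_contra hne
    rcases Nat.lt_trichotomy (t i) (t j) with h | h | h
    · exact key i j h hij
    · exact hne (hinj h)
    · exact key j i h hij.symm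
  have li := (linearIndependent_monoidHom Fqn Fqn).comp ρ hρinj
  have := Fintype.linearIndependent_iff.mp li c ?_
  · funext i; exact this i
  · funext x
    have := hc x
    simpa [Function.comp, ρ, powMonoidHom, Finset.sum_apply] using this

end Dedekind

/-- In a finite-dimensional vector space, every endomorphism admits a vector whose
annihilator is exactly the minimal polynomial ideal. -/
lemma exists_cyclic {K V : Type u} [Field K] [AddCommGroup V] [Module K V]
    [FiniteDimensional K V] (f : V →ₗ[K] V) :
    ∃ v : V, ∀ p : K[X], aeval f p v = 0 → aeval f p = 0 := by
  classical
  let N := Module.AEval' f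
  have htor : Module.IsTorsion K[X] N := by
    intro x
    refine ⟨⟨f.charpoly, mem_nonZeroDivisors_of_ne_zero f.charpoly_monic.ne_zero⟩, ?_⟩
    show (LinearMap.charpoly f) • x = 0
    apply (Module.AEval'.of f).symm.injective
    rw [Module.AEval.of_symm_smul, f.aeval_self_charpoly, map_zero]
    simp
  obtain ⟨ι, fι, p, hp, e, ⟨eqv⟩⟩ := Module.equiv_directSum_of_isTorsion htor
  haveI := fι
  set one : ⨁ i : ι, K[X] ⧸ (K[X] ∙ p i ^ e i) :=
    ∑ i, DirectSum.of (fun i => K[X] ⧸ (K[X] ∙ p i ^ e i)) i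
      (Submodule.Quotient.mk 1) with hone
  refine ⟨(Module.AEval'.of f).symm (eqv.symm one), fun r hr => ?_⟩
  have h0 : r • (eqv.symm one) = 0 := by
    apply (Module.AEval'.of f).symm.injective
    rw [Module.AEval.of_symm_smul, map_zero]
    exact hr
  have h1 : r • one = 0 := by
    have := congrArg eqv h0
    rwa [map_smul, LinearEquiv.apply_symm_apply, map_zero] at this
  have hmem : ∀ i : ι, r ∈ (K[X] ∙ p i ^ e i) := by
    intro i
    have h2 := congrArg (fun z => z i) h1
    simp only [hone, DirectSum.smul_apply, DirectSum.zero_apply] at h2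
    rw [DFinsupp.finset_sum_apply] at h2
    simp only [DirectSum.of_apply] at h2
    rw [Finset.sum_dite_eq'] at h2
    simp only [Finset.mem_univ, if_true] at h2
    rw [← Submodule.Quotient.mk_smul, Submodule.Quotient.mk_eq_zero] at h2
    simpa using h2
  have hz : ∀ y : ⨁ i : ι, K[X] ⧸ (K[X] ∙ p i ^ e i), r • y = 0 := by
    intro y
    induction y using DirectSum.induction_on with
    | zero => simp
    | of i x =>
        obtain ⟨z, hz⟩ := Submodule.Quotient.mk_surjective _ x
        rw [← DirectSum.of_smul, ← hz, ← Submodule.Quotient.mk_smul]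
        obtain ⟨c, hc⟩ := Submodule.mem_span_singleton.mp (hmem i)
        have hm : r • z ∈ (K[X] ∙ p i ^ e i) :=
          Submodule.mem_span_singleton.mpr
            ⟨z * c, by rw [smul_eq_mul, ← hc, smul_eq_mul, smul_eq_mul]; ring⟩
        rw [(Submodule.Quotient.mk_eq_zero _).mpr hm, map_zero]
    | add x y hx hy => rw [smul_add, hx, hy, add_zero]
  ext w
  simp only [LinearMap.zero_apply]
  have h2 : r • (Module.AEval'.of f w) = (0 : N) := by
    apply eqv.injective
    rw [map_smul, map_zero, hz]
  have h3 := Module.AEval.of_symm_smul (R := K) (M := V) f r (Module.AEval'.of f w)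
  rw [h2, map_zero, (Module.AEval'.of f).symm_apply_apply] at h3
  exact h3.symm

end Stmt0Aux

open Stmt0Aux

/-- The algebra `R_m` of q-linearized polynomial maps on `F_{q^{ms}}` with coefficients in
`F_{q^m}` is isomorphic as an `F_q`-algebra to `M_m(F_q[x]/⟨x^s - 1⟩)`: there is an injective
`F_q`-algebra homomorphism from the matrix algebra into `Module.End F_q F_{q^{ms}}` whose range
is exactly the set of such linearized maps. -/
theorem stmt0 (q m s : ℕ) (hm : 0 < m) (hs : 0 < s)
    (Fq Fqm Fqn : Type*) [Field Fq] [Field Fqm] [Field Fqn]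
    [Fintype Fq] [Fintype Fqm] [Fintype Fqn]
    [Algebra Fq Fqm] [Algebra Fqm Fqn] [Algebra Fq Fqn] [IsScalarTower Fq Fqm Fqn]
    (hq : Fintype.card Fq = q) (hqm : Fintype.card Fqm = q ^ m)
    (hqn : Fintype.card Fqn = q ^ (m * s)) :
    ∃ φ : Matrix (Fin m) (Fin m)
        (Polynomial Fq ⧸ (Ideal.span {Polynomial.X ^ s - 1} : Ideal (Polynomial Fq)))
        →ₐ[Fq] Module.End Fq Fqn,
      Function.Injective φ ∧
      Set.range φ = { f : Module.End Fq Fqn | ∃ a : Fin (m * s) → Fqn,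
        (∀ i, a i ∈ Set.range (algebraMap Fqm Fqn)) ∧
        ∀ x : Fqn, f x = ∑ i : Fin (m * s), a i * x ^ q ^ (i : ℕ) } := by
  classical
  have hq2 : 2 ≤ q := hq ▸ Fintype.one_lt_card
  ---- The intermediate field E (image of Fqm in Fqn) ----
  set E : IntermediateField Fq Fqn := (IsScalarTower.toAlgHom Fq Fqm Fqn).fieldRange with hE
  letI : Fintype ↥E := Fintype.ofFinite _
  have equivK : Fqm ≃ₐ[Fq] ↥E := AlgEquiv.ofInjectiveField (IsScalarTower.toAlgHom Fq Fqm Fqn)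
  have hcardE : Fintype.card ↥E = q ^ m := by
    rw [← hqm]; exact (Fintype.card_congr equivK.toEquiv).symm
  have hfrE : Module.finrank ↥E Fqn = s := by
    have h1 : Fintype.card Fqn = Fintype.card ↥E ^ Module.finrank ↥E Fqn :=
      Module.card_eq_pow_finrank
    rw [hqn, hcardE, ← pow_mul] at h1
    have := Nat.pow_right_injective hq2 h1
    exact (Nat.eq_of_mul_eq_mul_left hm this).symm
  have hfrqE : Module.finrank Fq ↥E = m := by
    have h1 : Fintype.card ↥E = Fintype.card Fq ^ Module.finrank Fq ↥E :=
      Module.card_eq_pow_finrank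
    rw [hcardE, hq] at h1
    exact (Nat.pow_right_injective hq2 h1).symm
  have hmemE : ∀ x : Fqn, x ∈ E ↔ x ∈ Set.range (algebraMap Fqm Fqn) := by
    intro x
    rw [hE, AlgHom.mem_fieldRange]
    constructor
    · rintro ⟨y, rfl⟩; exact ⟨y, (congrFun (IsScalarTower.coe_toAlgHom' Fq Fqm Fqn) y).symm⟩
    · rintro ⟨y, rfl⟩; exact ⟨y, congrFun (IsScalarTower.coe_toAlgHom' Fq Fqm Fqn) y⟩
  have halgE : ∀ c : ↥E, algebraMap ↥E Fqn c = (c : Fqn) := fun c => rfl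
  -- elements of E are fixed by x ↦ x^(q^m)
  have hfix : ∀ c : ↥E, (c : Fqn) ^ q ^ m = (c : Fqn) := by
    intro c
    obtain ⟨y, hy⟩ := (hmemE _).mp c.2
    rw [← hy, ← map_pow, ← hqm, FiniteField.pow_card]
  have hfixpow : ∀ (c : ↥E) (j : ℕ), (c : Fqn) ^ (q ^ m) ^ j = (c : Fqn) := by
    intro c j
    induction j with
    | zero => simp
    | succ j ih => rw [pow_succ, pow_mul, ih, hfix]
  ---- Frobenius maps ----
  set σL : Module.End Fq Fqn := frobL Fq Fqn m with hσL
  set σE : Module.End ↥E Fqn := frobL ↥E Fqn 1 with hσE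
  have hσE_pow : ∀ (j : ℕ) (x : Fqn), (σE ^ j) x = x ^ q ^ (m * j) := by
    intro j x
    rw [hσE, frobL_pow, frobL_apply, hcardE, one_mul, ← pow_mul]
  have hσL_pow : ∀ (j : ℕ) (x : Fqn), (σL ^ j) x = x ^ q ^ (m * j) := by
    intro j x
    rw [hσL, frobL_pow, frobL_apply, hq]
  ---- the normal element v ----
  obtain ⟨v, hv⟩ := exists_cyclic σE
  -- the family j ↦ σE^j v is linearly independent over E
  have hindep : LinearIndependent ↥E (fun j : Fin s => (σE ^ (j : ℕ)) v) := by
    rw [Fintype.linearIndependent_iff]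
    intro g hg
    set P : (↥E)[X] := ∑ j : Fin s, C (g j) * X ^ (j : ℕ) with hP
    have hPv : aeval σE P v = 0 := by
      rw [hP, map_sum]
      simpa only [map_mul, aeval_C, aeval_X_pow, LinearMap.coe_sum, Finset.sum_apply,
        Module.End.mul_apply, Module.algebraMap_end_apply] using hg
    have hP0 := hv P hPv
    have hc : ∀ x : Fqn, ∑ j : Fin s, (g j : Fqn) * x ^ q ^ (m * (j : ℕ)) = 0 := by
      intro x
      have := congrArg (fun F : Module.End ↥E Fqn => F x) hP0
      simp only [hP, map_sum, map_mul, aeval_C, aeval_X_pow, LinearMap.coe_sum,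
        Finset.sum_apply, Module.End.mul_apply, Module.algebraMap_end_apply,
        LinearMap.zero_apply] at this
      rw [← this]
      refine Finset.sum_congr rfl fun j _ => ?_
      rw [hσE_pow, Algebra.smul_def, halgE]
    have hz := dedekind (n := m * s) hq hqn (fun j : Fin s => m * (j : ℕ))
      (fun j => (Nat.mul_lt_mul_left hm).mpr j.2)
      (fun i j hij => by
        have : (i : ℕ) = j := Nat.eq_of_mul_eq_mul_left hm hij
        exact Fin.ext this)
      (fun j => (g j : Fqn)) hc
    intro j
    have := congrFun hz j
    exact_mod_cast Subtype.ext this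
  haveI : Nonempty (Fin s) := ⟨⟨0, hs⟩⟩
  set Bv : Module.Basis (Fin s) ↥E Fqn :=
    basisOfLinearIndependentOfCardEqFinrank hindep (by simpa using hfrE.symm) with hBv
  have hBv_apply : ∀ j : Fin s, Bv j = (σE ^ (j : ℕ)) v := by
    intro j; rw [hBv, coe_basisOfLinearIndependentOfCardEqFinrank]
  -- a basis of E over Fq
  set b : Module.Basis (Fin m) Fq ↥E := Module.finBasisOfFinrankEq Fq ↥E hfrqE with hb
  ---- the algebra A = Fq[X]/(X^s-1) and the module structure on Fqn ----
  set A := (Polynomial Fq ⧸ (Ideal.span {Polynomial.X ^ s - 1} : Ideal (Polynomial Fq))) with hA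
  have hmonic : (X ^ s - 1 : Fq[X]).Monic := by
    simpa using monic_X_pow_sub_C (1 : Fq) hs.ne'
  have hdeg : (X ^ s - 1 : Fq[X]).natDegree = s := by
    simpa using natDegree_X_pow_sub_C (n := s) (r := (1 : Fq))
  set βA : Module.Basis (Fin s) Fq A :=
    (AdjoinRoot.powerBasisAux' hmonic).reindex (finCongr hdeg) with hβA
  have hβA_apply : ∀ j : Fin s,
      βA j = Ideal.Quotient.mk _ (X ^ (j : ℕ) : Fq[X]) := by
    intro j
    refine (Module.Basis.reindex_apply (AdjoinRoot.powerBasisAux' hmonic) (finCongr hdeg) j).trans ?_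
    refine ((AdjoinRoot.powerBasis' hmonic).basis_eq_pow ((finCongr hdeg).symm j)).trans ?_
    show (AdjoinRoot.root _) ^ (((finCongr hdeg).symm j : Fin _) : ℕ) = _
    rw [AdjoinRoot.root, ← map_pow]
    rfl
  have hσs : σL ^ s = 1 := by
    rw [hσL, frobL_pow]
    ext x
    rw [frobL_apply, hq, ← hqn, FiniteField.pow_card, Module.End.one_apply]
  set ψ : A →ₐ[Fq] Module.End Fq Fqn :=
    Ideal.Quotient.liftₐ _ (aeval σL) (by
      intro a ha
      rw [Ideal.mem_span_singleton] at ha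
      obtain ⟨c, rfl⟩ := ha
      rw [map_mul, map_sub, map_one, aeval_X_pow, hσs, sub_self, zero_mul]) with hψ
  have hψmk : ∀ p : Fq[X], ψ (Ideal.Quotient.mk _ p) = aeval σL p := by
    intro p
    rw [hψ, Ideal.Quotient.liftₐ_apply]
    rfl
  letI instA : Module A Fqn := Module.compHom Fqn ψ.toRingHom
  have hsmulA : ∀ (a : A) (x : Fqn), a • x = ψ a x := fun _ _ => rfl
  letI instTower : IsScalarTower Fq A Fqn := by
    constructor
    intro c a x
    rw [hsmulA, hsmulA, Algebra.smul_def c a, map_mul, AlgHom.commutes]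
    rw [Module.End.mul_apply, Module.algebraMap_end_apply]
  letI instComm : SMulCommClass A Fq Fqn := by
    constructor
    intro a c x
    rw [hsmulA, hsmulA, map_smul]
  ---- the A-basis of Fqn ----
  set w : Fin m → Fqn := fun k => (b k : Fqn) * v with hw
  have hkey : ∀ (j : ℕ) (k : Fin m),
      (Ideal.Quotient.mk _ (X ^ j : Fq[X]) : A) • w k = (b k : Fqn) * ((σE ^ j) v) := by
    intro j k
    rw [hsmulA, hψmk, aeval_X_pow, hσL_pow, hw]
    show ((b k : Fqn) * v) ^ q ^ (m * j) = _
    rw [mul_pow, hσE_pow, pow_mul, hfixpow]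
  have hbk_smul : ∀ (k : Fin m) (y : Fqn), (b k) • y = (b k : Fqn) * y := by
    intro k y
    rw [Algebra.smul_def, halgE]
  have hWindep : LinearIndependent A w := by
    rw [Fintype.linearIndependent_iff]
    intro g hg
    have hgk : ∀ k, g k = ∑ j : Fin s, βA.repr (g k) j • βA j := fun k =>
      (βA.sum_repr (g k)).symm
    have h1 : (0 : Fqn)
        = ∑ j : Fin s, (∑ k : Fin m, βA.repr (g k) j • b k : ↥E) • ((σE ^ (j : ℕ)) v) := by
      calc (0 : Fqn) = ∑ k, g k • w k := hg.symm
        _ = ∑ k, ∑ j, (βA.repr (g k) j • βA j) • w k := by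
            refine Finset.sum_congr rfl fun k _ => ?_
            conv_lhs => rw [hgk k]
            rw [Finset.sum_smul]
        _ = ∑ k, ∑ j, βA.repr (g k) j • ((b k : Fqn) * ((σE ^ (j : ℕ)) v)) := by
            refine Finset.sum_congr rfl fun k _ => Finset.sum_congr rfl fun j _ => ?_
            rw [smul_assoc, hβA_apply, hkey]
        _ = ∑ j, ∑ k, βA.repr (g k) j • ((b k : Fqn) * ((σE ^ (j : ℕ)) v)) := Finset.sum_comm
        _ = ∑ j : Fin s, (∑ k : Fin m, βA.repr (g k) j • b k : ↥E) • ((σE ^ (j : ℕ)) v) := by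
            refine Finset.sum_congr rfl fun j _ => ?_
            rw [Finset.sum_smul]
            refine Finset.sum_congr rfl fun k _ => ?_
            rw [smul_assoc, hbk_smul]
    have h2 : ∀ j : Fin s, (∑ k : Fin m, βA.repr (g k) j • b k : ↥E) = 0 := by
      have := Fintype.linearIndependent_iff.mp hindep
        (fun j => (∑ k : Fin m, βA.repr (g k) j • b k : ↥E)) h1.symm
      exact this
    have h3 : ∀ (j : Fin s) (k : Fin m), βA.repr (g k) j = 0 := by
      intro j k
      exact Fintype.linearIndependent_iff.mp b.linearIndependent
        (fun k => βA.repr (g k) j) (h2 j) k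
    intro k
    rw [hgk k]
    simp only [h3 _ k, zero_smul, Finset.sum_const_zero]
  have hWspan : ⊤ ≤ Submodule.span A (Set.range w) := by
    intro x _
    have hx : x = ∑ j : Fin s, Bv.repr x j • Bv j := (Bv.sum_repr x).symm
    have hx2 : x = ∑ j : Fin s, ∑ k : Fin m,
        b.repr (Bv.repr x j) k • ((Ideal.Quotient.mk _ (X ^ (j : ℕ) : Fq[X]) : A) • w k) := by
      conv_lhs => rw [hx]
      refine Finset.sum_congr rfl fun j _ => ?_
      conv_lhs => rw [← b.sum_repr (Bv.repr x j)]
      rw [Finset.sum_smul]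
      refine Finset.sum_congr rfl fun k _ => ?_
      rw [smul_assoc, hbk_smul, hkey, hBv_apply]
    rw [hx2]
    refine Submodule.sum_mem _ fun j _ => Submodule.sum_mem _ fun k _ => ?_
    rw [← algebraMap_smul A (b.repr (Bv.repr x j) k), smul_smul]
    exact Submodule.smul_mem _ _ (Submodule.subset_span ⟨k, rfl⟩)
  set βW : Module.Basis (Fin m) A Fqn := Module.Basis.mk hWindep hWspan with hβW
  ---- the algebra isomorphism with matrices and restriction of scalars ----
  set eM : Module.End A Fqn ≃ₐ[A] Matrix (Fin m) (Fin m) A :=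
    LinearMap.toMatrixAlgEquiv βW with heM
  set endR : Module.End A Fqn →ₐ[Fq] Module.End Fq Fqn :=
    { toFun := fun f => LinearMap.restrictScalars Fq f
      map_one' := rfl
      map_mul' := fun f g => rfl
      map_zero' := rfl
      map_add' := fun f g => rfl
      commutes' := fun c => by
        apply LinearMap.ext
        intro x
        show (algebraMap Fq (Module.End A Fqn) c) x = algebraMap Fq (Module.End Fq Fqn) c x
        rw [Module.algebraMap_end_apply, Algebra.algebraMap_eq_smul_one,
          LinearMap.smul_apply, Module.End.one_apply] } with hendR
  have hendR_apply : ∀ (f : Module.End A Fqn) (x : Fqn), endR f x = f x := fun _ _ => rfl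
  have hendRinj : Function.Injective endR := by
    intro f g hfg
    apply LinearMap.ext
    intro x
    exact congrArg (fun h : Module.End Fq Fqn => h x) hfg
  set eA : Matrix (Fin m) (Fin m) A ≃ₐ[Fq] Module.End A Fqn :=
    AlgEquiv.restrictScalars Fq eM.symm with heA
  set φ : Matrix (Fin m) (Fin m) A →ₐ[Fq] Module.End Fq Fqn := endR.comp eA.toAlgHom with hφ
  have hφcoe : ⇑φ = ⇑endR ∘ ⇑eA := by rw [hφ]; rfl
  refine ⟨φ, ?_, ?_⟩
  · rw [hφcoe]
    exact hendRinj.comp eA.injective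
  · ---- range computation ----
    set frobs : Fin (m * s) → Module.End Fq Fqn := fun i => frobL Fq Fqn (i : ℕ) with hfrobs
    set coes : (Fin (m * s) → ↥E) →ₗ[Fq] (Fin (m * s) → Fqn) :=
      LinearMap.pi (fun i => (E.val.toLinearMap).comp (LinearMap.proj i)) with hcoes
    set Θ : (Fin (m * s) → ↥E) →ₗ[Fq] Module.End Fq Fqn :=
      ((Fintype.linearCombination Fqn frobs).restrictScalars Fq).comp coes with hΘ
    have hΘ_apply : ∀ (a : Fin (m * s) → ↥E) (x : Fqn),
        Θ a x = ∑ i : Fin (m * s), (a i : Fqn) * x ^ q ^ (i : ℕ) := by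
      intro a x
      rw [hΘ]
      simp only [LinearMap.coe_comp, Function.comp_apply, LinearMap.coe_restrictScalars]
      rw [Fintype.linearCombination_apply, LinearMap.sum_apply]
      refine Finset.sum_congr rfl fun i _ => ?_
      rw [LinearMap.smul_apply, hcoes]
      simp only [LinearMap.pi_apply, LinearMap.coe_comp, Function.comp_apply,
        LinearMap.proj_apply, AlgHom.toLinearMap_apply, IntermediateField.coe_val]
      rw [smul_eq_mul, hfrobs, frobL_apply, hq]
    set T : Submodule Fq (Module.End Fq Fqn) := LinearMap.range Θ with hT
    set D : Module.End Fq Fqn →ₗ[Fq] Module.End Fq Fqn :=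
      LinearMap.mulLeft Fq σL - LinearMap.mulRight Fq σL with hD
    set Csub : Submodule Fq (Module.End Fq Fqn) := LinearMap.ker D with hC
    have hmemC : ∀ f : Module.End Fq Fqn, f ∈ Csub ↔ σL * f = f * σL := by
      intro f
      rw [hC, LinearMap.mem_ker, hD, LinearMap.sub_apply, LinearMap.mulLeft_apply,
        LinearMap.mulRight_apply, sub_eq_zero]
    have hXsmul : ∀ x : Fqn, (Ideal.Quotient.mk _ (X : Fq[X]) : A) • x = σL x := by
      intro x; rw [hsmulA, hψmk, aeval_X]
    have hrangeR : Set.range ⇑endR = ↑Csub := by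
      apply Set.eq_of_subset_of_subset
      · rintro _ ⟨f, rfl⟩
        rw [SetLike.mem_coe, hmemC]
        apply LinearMap.ext; intro x
        rw [Module.End.mul_apply, Module.End.mul_apply, hendR_apply, hendR_apply,
          ← hXsmul, ← hXsmul, map_smul]
      · intro f hf
        rw [SetLike.mem_coe, hmemC] at hf
        have hcommP : ∀ p : Fq[X], aeval σL p * f = f * aeval σL p := by
          intro p
          induction p using Polynomial.induction_on' with
          | add p1 p2 h1 h2 => rw [map_add, add_mul, mul_add, h1, h2]
          | monomial n c =>
              rw [aeval_monomial]
              have hσn : σL ^ n * f = f * σL ^ n := Commute.pow_left hf n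
              rw [mul_assoc, hσn, ← mul_assoc, Algebra.commutes, mul_assoc]
        refine ⟨{ toFun := f, map_add' := f.map_add, map_smul' := ?_ }, ?_⟩
        · intro a x
          obtain ⟨p, rfl⟩ := Ideal.Quotient.mk_surjective a
          rw [RingHom.id_apply, hsmulA, hsmulA, hψmk]
          have h5 := congrArg (fun F : Module.End Fq Fqn => F x) (hcommP p)
          simp only [Module.End.mul_apply] at h5
          exact h5.symm
        · apply LinearMap.ext; intro x; rfl
    letI : Finite (Module.End A Fqn) :=
      Finite.of_injective (fun f : Module.End A Fqn => (f : Fqn → Fqn)) DFunLike.coe_injective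
    set rlin : Module.End A Fqn →ₗ[Fq] Module.End Fq Fqn :=
      LinearMap.restrictScalarsₗ (R := Fq) (S := A) (M := Fqn) (N := Fqn) (R₁ := Fq) with hrlin
    have hrlineq : ∀ g : Module.End A Fqn, rlin g = endR g := fun _ => rfl
    have hCr : Csub = LinearMap.range rlin := by
      ext f
      rw [LinearMap.mem_range]
      constructor
      · intro hf
        have : f ∈ Set.range ⇑endR := hrangeR ▸ (SetLike.mem_coe.mpr hf)
        obtain ⟨g, hg⟩ := this
        exact ⟨g, (hrlineq g).trans hg⟩
      · rintro ⟨g, rfl⟩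
        have : endR g ∈ Set.range ⇑endR := ⟨g, rfl⟩
        rw [hrangeR] at this
        rw [hrlineq g]
        exact SetLike.mem_coe.mp this
    have hrlin_inj : Function.Injective rlin := by
      intro f g hfg
      apply hendRinj
      rw [← hrlineq, ← hrlineq]
      exact hfg
    have hfinC : Module.finrank Fq Csub = m * m * s := by
      rw [hCr, LinearMap.finrank_range_of_inj hrlin_inj]
      have h1 : Module.finrank Fq (Module.End A Fqn)
          = Module.finrank Fq (Matrix (Fin m) (Fin m) A) :=
        (AlgEquiv.restrictScalars Fq eM).toLinearEquiv.finrank_eq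
      have h2 : Module.finrank Fq A = s := by
        rw [Module.finrank_eq_card_basis βA, Fintype.card_fin]
      rw [h1, Module.finrank_matrix, h2, Fintype.card_fin]
    have hΘ0 : ∀ aa : Fin (m * s) → ↥E, Θ aa = 0 → aa = 0 := by
      intro aa h0
      have hc : ∀ x : Fqn, ∑ i : Fin (m * s), ((aa i : Fqn)) * x ^ q ^ (i : ℕ) = 0 := by
        intro x
        rw [← hΘ_apply aa x, h0, LinearMap.zero_apply]
      have := dedekind hq hqn (fun i : Fin (m * s) => (i : ℕ)) (fun i => i.2)
        Fin.val_injective (fun i => (aa i : Fqn)) hc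
      funext i
      exact Subtype.ext (congrFun this i)
    have hΘinj : Function.Injective Θ := by
      intro a a' haa
      have h0 : Θ (a - a') = 0 := by rw [map_sub, haa, sub_self]
      have := hΘ0 _ h0
      exact sub_eq_zero.mp this
    have hfinT : Module.finrank Fq T = m * s * m := by
      rw [hT, LinearMap.finrank_range_of_inj hΘinj]
      rw [Module.finrank_pi_fintype]
      simp [hfrqE, Finset.sum_const, Fintype.card_fin, smul_eq_mul]
    have hTleC : T ≤ Csub := by
      intro f hf
      rw [hT, LinearMap.mem_range] at hf
      obtain ⟨a, rfl⟩ := hf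
      rw [hmemC]
      apply LinearMap.ext; intro x
      have hσLmap : ∀ y : Fqn, σL y = y ^ q ^ m := by
        intro y; rw [hσL, frobL_apply, hq]
      rw [Module.End.mul_apply, Module.End.mul_apply, hΘ_apply, map_sum, hΘ_apply]
      refine Finset.sum_congr rfl fun i _ => ?_
      rw [hσLmap, hσLmap, mul_pow, hfix, ← pow_mul, ← pow_mul,
        mul_comm (q ^ m) (q ^ (i : ℕ))]
    have hTC : T = Csub := Submodule.eq_of_le_of_finrank_eq hTleC (by rw [hfinT, hfinC]; ring)
    calc Set.range ⇑φ = Set.range (⇑endR ∘ ⇑eA) := by rw [hφcoe]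
      _ = Set.range ⇑endR := by rw [Set.range_comp, eA.surjective.range_eq, Set.image_univ]
      _ = ↑Csub := hrangeR
      _ = ↑T := by rw [hTC]
      _ = _ := by
        ext f
        simp only [SetLike.mem_coe, hT, LinearMap.mem_range, Set.mem_setOf_eq]
        constructor
        · rintro ⟨a, rfl⟩
          exact ⟨fun i => ↑(a i), fun i => (hmemE _).mp (a i).2, fun x => hΘ_apply a x⟩
        · rintro ⟨a', hmem, hform⟩
          refine ⟨fun i => ⟨a' i, (hmemE _).mpr (hmem i)⟩, ?_⟩
          apply LinearMap.ext; intro x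
          rw [hΘ_apply, hform]
end

section
/- Let α ∈ F_{q^m} be normal over F_q with dual normal basis element u. The matrix A = (α^{q^{i+j}})_{0≤i,j≤m−1} (exponents mod m) is invertible, with inverse A^{−1} = (u^{q^{i+j}})_{0≤i,j≤m−1}. -/
lemma trace_key (q m : ℕ) (hm : 0 < m)
    (Fq Fqm : Type*) [Field Fq] [Field Fqm] [Fintype Fq] [Fintype Fqm] [Algebra Fq Fqm]
    (hq : Fintype.card Fq = q) (hqm : Fintype.card Fqm = q ^ m)
    (α : Fqm) (b : Module.Basis (Fin m) Fq Fqm) (hb : ∀ i : Fin m, b i = α ^ q ^ (i : ℕ))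
    (x : Fqm) :
    algebraMap Fq Fqm (Algebra.trace Fq Fqm x) = ∑ j : Fin m, x ^ q ^ (j : ℕ) := by
  have : FiniteDimensional Fq Fqm := Module.Finite.of_basis b
  obtain ⟨p, hpK⟩ := CharP.exists Fq
  obtain ⟨n, hp, hcard⟩ := FiniteField.card Fq p
  haveI : Fact p.Prime := ⟨hp⟩
  haveI : CharP Fqm p := charP_of_injective_algebraMap' Fq p
  have hring : ∀ x : Fqm, (iterateFrobenius Fqm p n) x = x ^ q := by
    intro x; rw [iterateFrobenius_def, ← hq, hcard]
  have hfix : ∀ c : Fq, (iterateFrobenius Fqm p n) (algebraMap Fq Fqm c) = algebraMap Fq Fqm c := by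
    intro c
    rw [hring, ← map_pow, ← hq, FiniteField.pow_card]
  let f : Fqm →ₐ[Fq] Fqm := { iterateFrobenius Fqm p n with commutes' := hfix }
  have hfbij : Function.Bijective f :=
    (Finite.injective_iff_bijective).mp (RingHom.injective (f : Fqm →+* Fqm))
  let σ : Fqm ≃ₐ[Fq] Fqm := AlgEquiv.ofBijective f hfbij
  have hσ : ∀ x : Fqm, σ x = x ^ q := hring
  have hσpow : ∀ (j : ℕ) (x : Fqm), (σ ^ j) x = x ^ q ^ j := by
    intro j
    induction j with
    | zero => simp
    | succ k ih =>
      intro x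
      rw [pow_succ, AlgEquiv.mul_apply, ih, hσ, ← pow_mul, pow_succ, Nat.mul_comm]
  have hq2 : 2 ≤ q := hq ▸ Fintype.one_lt_card
  have hfr : Module.finrank Fq Fqm = m := by
    have := Module.card_eq_pow_finrank (K := Fq) (V := Fqm)
    rw [hq, hqm] at this
    exact (Nat.pow_right_injective hq2 this.symm)
  have hbij : Function.Bijective (fun j : Fin m => σ ^ (j : ℕ)) := by
    have hcardGal : Fintype.card (Fqm ≃ₐ[Fq] Fqm) = m := by
      rw [← Nat.card_eq_fintype_card, IsGalois.card_aut_eq_finrank, hfr]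
    refine (Fintype.bijective_iff_injective_and_card _).mpr ⟨?_, by simp [hcardGal]⟩
    intro i j hij
    have hbi : b i = b j := by
      rw [hb, hb]
      have := congrArg (fun e : Fqm ≃ₐ[Fq] Fqm => e α) hij
      simpa [hσpow] using this
    exact b.injective hbi
  let e : Fin m ≃ (Fqm ≃ₐ[Fq] Fqm) := Equiv.ofBijective _ hbij
  rw [trace_eq_sum_automorphisms, ← e.sum_comp]
  refine Finset.sum_congr rfl fun j _ => ?_
  show (σ ^ (j : ℕ)) x = x ^ q ^ (j : ℕ)
  exact hσpow _ _

/-- For a normal element `α` with dual normal basis element `u`, the matrix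
`(α^{q^{i+j}})` is invertible with inverse `(u^{q^{i+j}})`. -/
theorem stmt2 (q m : ℕ) (hm : 0 < m)
    (Fq Fqm : Type*) [Field Fq] [Field Fqm] [Fintype Fq] [Fintype Fqm] [Algebra Fq Fqm]
    (hq : Fintype.card Fq = q) (hqm : Fintype.card Fqm = q ^ m)
    (α u : Fqm)
    (b : Module.Basis (Fin m) Fq Fqm) (hb : ∀ i : Fin m, b i = α ^ q ^ (i : ℕ))
    (hdual : ∀ i j : Fin m,
      Algebra.trace Fq Fqm (α ^ q ^ (i : ℕ) * u ^ q ^ (j : ℕ)) = if i = j then 1 else 0) :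
    (Matrix.of fun i j : Fin m => α ^ q ^ ((i : ℕ) + (j : ℕ))) *
        (Matrix.of fun i j : Fin m => u ^ q ^ ((i : ℕ) + (j : ℕ))) = 1 ∧
    (Matrix.of fun i j : Fin m => u ^ q ^ ((i : ℕ) + (j : ℕ))) *
        (Matrix.of fun i j : Fin m => α ^ q ^ ((i : ℕ) + (j : ℕ))) = 1 := by
  have key := trace_key q m hm Fq Fqm hq hqm α b hb
  have hpow : ∀ (x : Fqm) (i j : ℕ), x ^ q ^ (i + j) = (x ^ q ^ i) ^ q ^ j := by
    intro x i j; rw [← pow_mul, ← pow_add]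
  constructor <;> ext i k <;>
    simp only [Matrix.mul_apply, Matrix.of_apply, Matrix.one_apply]
  · calc ∑ j : Fin m, α ^ q ^ ((i : ℕ) + (j : ℕ)) * u ^ q ^ ((j : ℕ) + (k : ℕ))
        = ∑ j : Fin m, (α ^ q ^ (i : ℕ) * u ^ q ^ (k : ℕ)) ^ q ^ (j : ℕ) := by
          refine Finset.sum_congr rfl fun j _ => ?_
          rw [mul_pow, hpow α (i : ℕ) (j : ℕ), ← hpow u (k : ℕ) (j : ℕ), Nat.add_comm (k : ℕ)]
      _ = algebraMap Fq Fqm (Algebra.trace Fq Fqm (α ^ q ^ (i : ℕ) * u ^ q ^ (k : ℕ))) :=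
          (key _).symm
      _ = if i = k then 1 else 0 := by
          rw [hdual]; split <;> simp
  · calc ∑ j : Fin m, u ^ q ^ ((i : ℕ) + (j : ℕ)) * α ^ q ^ ((j : ℕ) + (k : ℕ))
        = ∑ j : Fin m, (α ^ q ^ (k : ℕ) * u ^ q ^ (i : ℕ)) ^ q ^ (j : ℕ) := by
          refine Finset.sum_congr rfl fun j _ => ?_
          rw [mul_pow, Nat.add_comm (j : ℕ) (k : ℕ), hpow α (k : ℕ) (j : ℕ),
            ← hpow u (i : ℕ) (j : ℕ)]
          ring
      _ = algebraMap Fq Fqm (Algebra.trace Fq Fqm (α ^ q ^ (k : ℕ) * u ^ q ^ (i : ℕ))) :=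
          (key _).symm
      _ = if i = k then 1 else 0 := by
          rw [hdual]
          rcases eq_or_ne i k with h | h
          · simp [h]
          · simp [h, h.symm]
end

section
/- If R is a finite commutative ring with unity and m ≥ 2, then the general linear group GL_m(R) is generated by elementary matrices: the transvections I + c·E_{jk} (j ≠ k, c ∈ R) together with the dilations D_l(v) (identity matrix with diagonal entry l replaced by a unit v ∈ R^×). -/
open Finset

/-- In a finite commutative ring, an element avoiding... stable range 1 vector form. -/
lemma key_unit {R : Type*} [CommRing R] [Finite R] {ι : Type*} [Fintype ι]
    (v : ι → R) (i0 : ι) (c : ι → R) (hc : ∑ i, c i * v i = 1) :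
    ∃ t : ι → R, t i0 = 0 ∧ IsUnit (v i0 + ∑ i, t i * v i) := by
  classical
  rcases subsingleton_or_nontrivial R with hR | hR
  · exact ⟨0, rfl, isUnit_of_subsingleton _⟩
  haveI : IsArtinianRing R := inferInstance
  let MI := {I : Ideal R | I.IsMaximal}
  haveI : Finite MI := (IsArtinianRing.setOfPred_isMaximal_finite R).to_subtype
  haveI : Fintype MI := Fintype.ofFinite MI
  have hmax : ∀ M : MI, (M : Ideal R).IsMaximal := fun M => M.2
  -- pairwise coprime
  have hco : Pairwise fun (M M' : MI) => IsCoprime (M : Ideal R) (M' : Ideal R) := by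
    intro M M' h
    exact Ideal.isCoprime_iff_sup_eq.mpr <|
      (hmax M).coprime_of_ne (hmax M') (fun e => h (Subtype.ext e))
  -- for each maximal ideal, some v i is not in it
  have hex : ∀ M : MI, ∃ i, v i ∉ (M : Ideal R) := by
    intro M
    by_contra h
    push_neg at h
    have h1 : (1 : R) ∈ (M : Ideal R) := by
      rw [← hc]; exact Ideal.sum_mem _ fun i _ => Ideal.mul_mem_left _ _ (h i)
    exact (hmax M).ne_top ((Ideal.eq_top_iff_one _).mpr h1)
  choose σ hσ using hex
  -- idempotent-like elements
  have hid : ∀ M0 : MI, ∃ e : R, ∀ M : MI,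
      e - (if M = M0 then 1 else 0) ∈ (M : Ideal R) := by
    intro M0
    obtain ⟨r, hr⟩ := Ideal.exists_forall_sub_mem_ideal (I := fun M : MI => (M : Ideal R))
      hco (fun M => if M = M0 then 1 else 0)
    exact ⟨r, hr⟩
  choose e he using hid
  set t : ι → R := fun i => ∑ M : MI, if σ M = i ∧ v i0 ∈ (M : Ideal R) then e M else 0 with ht
  have ht0 : t i0 = 0 := by
    apply Finset.sum_eq_zero
    intro M _
    rw [if_neg]
    rintro ⟨h1, h2⟩
    exact hσ M (h1 ▸ h2)
  have hT : ∑ i, t i * v i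
      = ∑ M : MI, (if v i0 ∈ (M : Ideal R) then e M * v (σ M) else 0) := by
    simp only [ht, Finset.sum_mul, ite_mul, zero_mul]
    rw [Finset.sum_comm]
    refine Finset.sum_congr rfl fun M _ => ?_
    by_cases hP : v i0 ∈ (M : Ideal R)
    · simp [hP]
    · simp [hP]
  refine ⟨t, ht0, ?_⟩
  set x := v i0 + ∑ i, t i * v i with hx
  have hnotin : ∀ M : MI, x ∉ (M : Ideal R) := by
    intro M hxM
    have hTm : (∑ i, t i * v i) - (if v i0 ∈ (M : Ideal R) then v (σ M) else 0)
        ∈ (M : Ideal R) := by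
      rw [hT, ← Finset.sum_erase_add _ _ (Finset.mem_univ M)]
      have h1 : (∑ M' ∈ Finset.univ.erase M,
          (if v i0 ∈ (M' : Ideal R) then e M' * v (σ M') else 0)) ∈ (M : Ideal R) := by
        refine Ideal.sum_mem _ fun M' hM' => ?_
        have hne : M' ≠ M := (Finset.mem_erase.mp hM').1
        have heM' : e M' ∈ (M : Ideal R) := by
          have := he M' M
          rwa [if_neg hne.symm, sub_zero] at this
        split
        · exact Ideal.mul_mem_right _ _ heM'
        · exact Ideal.zero_mem _
      have h2 : (if v i0 ∈ (M : Ideal R) then e M * v (σ M) else 0)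
          - (if v i0 ∈ (M : Ideal R) then v (σ M) else 0) ∈ (M : Ideal R) := by
        by_cases hP : v i0 ∈ (M : Ideal R)
        · rw [if_pos hP, if_pos hP,
            show e M * v (σ M) - v (σ M) = (e M - 1) * v (σ M) by ring]
          refine Ideal.mul_mem_right _ _ ?_
          have := he M M
          rwa [if_pos rfl] at this
        · rw [if_neg hP, if_neg hP, sub_zero]; exact Ideal.zero_mem _
      convert Ideal.add_mem _ h1 h2 using 1
      ring
    by_cases hP : v i0 ∈ (M : Ideal R)
    · rw [if_pos hP] at hTm
      have : v (σ M) ∈ (M : Ideal R) := by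
        have : v (σ M) = x - v i0 - ((∑ i, t i * v i) - v (σ M)) := by rw [hx]; ring
        rw [this]
        exact Ideal.sub_mem _ (Ideal.sub_mem _ hxM hP) hTm
      exact hσ M this
    · rw [if_neg hP, sub_zero] at hTm
      have : v i0 ∈ (M : Ideal R) := by
        have h3 : v i0 = x - ∑ i, t i * v i := by rw [hx]; ring
        rw [h3]
        exact Ideal.sub_mem _ hxM hTm
      exact hP this
  by_contra hnu
  have hne : Ideal.span {x} ≠ ⊤ := fun h => hnu (Ideal.span_singleton_eq_top.mp h)
  obtain ⟨M, hM, hle⟩ := Ideal.exists_le_maximal _ hne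
  exact hnotin ⟨M, hM⟩ (hle (Ideal.mem_span_singleton_self x))

section AuxMat

variable {R : Type*} [CommRing R] {n : Type*} [Fintype n] [DecidableEq n]

/-- A transvection as a unit of the matrix ring. -/
def tUnit (i j : n) (h : i ≠ j) (c : R) : (Matrix n n R)ˣ where
  val := Matrix.transvection i j c
  inv := Matrix.transvection i j (-c)
  val_inv := by
    rw [Matrix.transvection_mul_transvection_same _ _ h, add_neg_cancel,
      Matrix.transvection_zero]
  inv_val := by
    rw [Matrix.transvection_mul_transvection_same _ _ h, neg_add_cancel,
      Matrix.transvection_zero]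

lemma tUnit_val (i j : n) (h : i ≠ j) (c : R) :
    (tUnit i j h c : Matrix n n R) = 1 + Matrix.single i j c := rfl

lemma rowSum_apply (k : n) (t : n → R) (p q : n) :
    (∑ i, Matrix.single k i (t i)) p q = if p = k then t q else 0 := by
  rw [Matrix.sum_apply]
  simp only [Matrix.single, Matrix.of_apply]
  by_cases h : p = k
  · subst h
    simp
  · rw [if_neg h]
    exact Finset.sum_eq_zero fun i _ => if_neg (fun hc => h hc.1.symm)

lemma colSum_apply (k : n) (t : n → R) (p q : n) :
    (∑ i, Matrix.single i k (t i)) p q = if q = k then t p else 0 := by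
  rw [Matrix.sum_apply]
  simp only [Matrix.single, Matrix.of_apply]
  by_cases h : q = k
  · subst h
    simp
  · rw [if_neg h]
    exact Finset.sum_eq_zero fun i _ => if_neg (fun hc => h hc.2.symm)

lemma row_prod_mem (G : Subgroup (Matrix n n R)ˣ)
    (hGt : ∀ (i j : n) (h : i ≠ j) (c : R), tUnit i j h c ∈ G) (k : n) (s : Finset n) :
    ∀ t : n → R, t k = 0 → (∀ i ∉ s, t i = 0) →
    ∃ U : (Matrix n n R)ˣ, U ∈ G ∧
      (U : Matrix n n R) = 1 + ∑ i, Matrix.single k i (t i) := by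
  classical
  induction s using Finset.induction_on with
  | empty =>
    intro t htk hsupp
    refine ⟨1, one_mem G, ?_⟩
    have hz : ∀ i, t i = 0 := fun i => hsupp i (Finset.notMem_empty i)
    simp only [hz, Matrix.single_zero, Finset.sum_const_zero, add_zero, Units.val_one]
  | @insert a s ha IH =>
    intro t htk hsupp
    by_cases hak : a = k
    · refine IH t htk fun i hi => ?_
      by_cases hia : i = a
      · rw [hia, hak]; exact htk
      · exact hsupp i (by simp [hia, hi])
    · set t' := Function.update t a 0 with ht'
      have htk' : t' k = 0 := by
        rw [ht', Function.update_of_ne (fun e => hak e.symm)]; exact htk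
      have hsupp' : ∀ i ∉ s, t' i = 0 := by
        intro i hi
        by_cases hia : i = a
        · rw [hia, ht', Function.update_self]
        · rw [ht', Function.update_of_ne hia]
          exact hsupp i (by simp [hia, hi])
      obtain ⟨U', hU'G, hU'val⟩ := IH t' htk' hsupp'
      have hka : k ≠ a := fun e => hak e.symm
      refine ⟨U' * tUnit k a hka (t a), mul_mem hU'G (hGt k a hka (t a)), ?_⟩
      rw [Units.val_mul, hU'val, tUnit_val]
      have hfun : (fun i => Matrix.single k i (t' i))
          = Function.update (fun i => Matrix.single k i (t i)) a 0 := by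
        funext i
        by_cases hia : i = a
        · subst hia
          rw [Function.update_self, ht', Function.update_self, Matrix.single_zero]
        · rw [Function.update_of_ne hia, ht', Function.update_of_ne hia]
      have hsum' : ∑ i, Matrix.single k i (t' i)
          = ∑ i ∈ Finset.univ \ {a}, Matrix.single k i (t i) := by
        rw [hfun, Finset.sum_update_of_mem (Finset.mem_univ a), zero_add]
      have hsum : (∑ i, Matrix.single k i (t i))
          = (∑ i ∈ Finset.univ \ {a}, Matrix.single k i (t i))
            + Matrix.single k a (t a) := by
        rw [← Finset.add_sum_erase _ _ (Finset.mem_univ a), Finset.erase_eq]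
        exact add_comm _ _
      have hcross : (∑ i, Matrix.single k i (t' i)) * Matrix.single k a (t a)
          = 0 := by
        rw [Finset.sum_mul]
        refine Finset.sum_eq_zero fun i _ => ?_
        by_cases hik : i = k
        · subst hik
          rw [htk', Matrix.single_zero, zero_mul]
        · exact Matrix.single_mul_single_of_ne (h := hik) ..
      rw [Matrix.mul_add, Matrix.mul_one, Matrix.add_mul, Matrix.one_mul, hcross, add_zero,
        hsum, hsum']
      abel

lemma col_prod_mem (G : Subgroup (Matrix n n R)ˣ)
    (hGt : ∀ (i j : n) (h : i ≠ j) (c : R), tUnit i j h c ∈ G) (k : n) (s : Finset n) :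
    ∀ t : n → R, t k = 0 → (∀ i ∉ s, t i = 0) →
    ∃ U : (Matrix n n R)ˣ, U ∈ G ∧
      (U : Matrix n n R) = 1 + ∑ i, Matrix.single i k (t i) := by
  classical
  induction s using Finset.induction_on with
  | empty =>
    intro t htk hsupp
    refine ⟨1, one_mem G, ?_⟩
    have hz : ∀ i, t i = 0 := fun i => hsupp i (Finset.notMem_empty i)
    simp only [hz, Matrix.single_zero, Finset.sum_const_zero, add_zero, Units.val_one]
  | @insert a s ha IH =>
    intro t htk hsupp
    by_cases hak : a = k
    · refine IH t htk fun i hi => ?_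
      by_cases hia : i = a
      · rw [hia, hak]; exact htk
      · exact hsupp i (by simp [hia, hi])
    · set t' := Function.update t a 0 with ht'
      have htk' : t' k = 0 := by
        rw [ht', Function.update_of_ne (fun e => hak e.symm)]; exact htk
      have hsupp' : ∀ i ∉ s, t' i = 0 := by
        intro i hi
        by_cases hia : i = a
        · rw [hia, ht', Function.update_self]
        · rw [ht', Function.update_of_ne hia]
          exact hsupp i (by simp [hia, hi])
      obtain ⟨U', hU'G, hU'val⟩ := IH t' htk' hsupp'
      refine ⟨U' * tUnit a k hak (t a), mul_mem hU'G (hGt a k hak (t a)), ?_⟩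
      rw [Units.val_mul, hU'val, tUnit_val]
      have hfun : (fun i => Matrix.single i k (t' i))
          = Function.update (fun i => Matrix.single i k (t i)) a 0 := by
        funext i
        by_cases hia : i = a
        · subst hia
          rw [Function.update_self, ht', Function.update_self, Matrix.single_zero]
        · rw [Function.update_of_ne hia, ht', Function.update_of_ne hia]
      have hsum' : ∑ i, Matrix.single i k (t' i)
          = ∑ i ∈ Finset.univ \ {a}, Matrix.single i k (t i) := by
        rw [hfun, Finset.sum_update_of_mem (Finset.mem_univ a), zero_add]
      have hsum : (∑ i, Matrix.single i k (t i))
          = (∑ i ∈ Finset.univ \ {a}, Matrix.single i k (t i))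
            + Matrix.single a k (t a) := by
        rw [← Finset.add_sum_erase _ _ (Finset.mem_univ a), Finset.erase_eq]
        exact add_comm _ _
      have hcross : (∑ i, Matrix.single i k (t' i)) * Matrix.single a k (t a)
          = 0 := by
        rw [Finset.sum_mul]
        refine Finset.sum_eq_zero fun i _ => ?_
        exact Matrix.single_mul_single_of_ne (h := fun e => hak e.symm) ..
      rw [Matrix.mul_add, Matrix.mul_one, Matrix.add_mul, Matrix.one_mul, hcross, add_zero,
        hsum, hsum']
      abel

end AuxMat
/-- For a finite commutative ring `R` and `m ≥ 2`, `GL_m(R)` is generated by elementary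
matrices: transvections `I + c·E_{jk}` (`j ≠ k`) and dilations (identity with a diagonal
entry replaced by a unit). -/
theorem stmt4 (R : Type*) [CommRing R] [Fintype R] (m : ℕ) (hm : 2 ≤ m) :
    Subgroup.closure { A : (Matrix (Fin m) (Fin m) R)ˣ |
      (∃ (j k : Fin m) (c : R), j ≠ k ∧
        (A : Matrix (Fin m) (Fin m) R) = 1 + Matrix.single j k c) ∨
      (∃ (l : Fin m) (v : Rˣ),
        (A : Matrix (Fin m) (Fin m) R) =
          Matrix.diagonal (Function.update (fun _ => (1 : R)) l (v : R))) } = ⊤ := by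
  classical
  set Mn := Matrix (Fin m) (Fin m) R with hMn
  set G := Subgroup.closure { A : Mnˣ |
      (∃ (j k : Fin m) (c : R), j ≠ k ∧
        (A : Mn) = 1 + Matrix.single j k c) ∨
      (∃ (l : Fin m) (v : Rˣ),
        (A : Mn) = Matrix.diagonal (Function.update (fun _ => (1 : R)) l (v : R))) } with hG
  rw [eq_top_iff]
  have hGt : ∀ (i j : Fin m) (h : i ≠ j) (c : R), tUnit i j h c ∈ G := by
    intro i j h c
    exact Subgroup.subset_closure (Or.inl ⟨i, j, c, h, rfl⟩)
  have main : ∀ d : ℕ, ∀ A : Mnˣ,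
      (∀ p q : Fin m, (p.val < m - d ∨ q.val < m - d) → (A : Mn) p q = (1 : Mn) p q) →
      A ∈ G := by
    intro d
    induction d with
    | zero =>
      intro A hA
      have hA1 : (A : Mn) = 1 := by
        ext p q
        exact hA p q (Or.inl (by omega))
      rw [show A = 1 from Units.ext hA1]
      exact one_mem G
    | succ d IH =>
      intro A hA
      by_cases hdm : m - (d + 1) = m - d
      · exact IH A fun p q h => hA p q (by omega)
      have hk : m - (d + 1) < m := by omega
      set k := m - (d + 1) with hkdef
      have hk1 : m - d = k + 1 := by omega
      set kk : Fin m := ⟨k, hk⟩ with hkk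
      have hkkv : kk.val = k := rfl
      have hlt_ne : ∀ p : Fin m, p.val < k → p ≠ kk := by
        intro p hp e
        rw [e, hkkv] at hp
        exact lt_irrefl _ hp
      have hgt_ne : ∀ p : Fin m, ¬p.val ≤ k → p ≠ kk := by
        intro p hp e
        rw [e, hkkv] at hp
        exact hp le_rfl
      set a : Mn := (A : Mn) with haA
      have hApat : ∀ p q : Fin m, (p.val < k ∨ q.val < k) → a p q = (1 : Mn) p q :=
        fun p q h => hA p q (by omega)
      -- the column kk is unimodular
      have hcol : ∑ i, ((A⁻¹ : Mnˣ) : Mn) kk i * a i kk = 1 := by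
        have h1 : ((A⁻¹ : Mnˣ) : Mn) * a = 1 := by
          rw [haA, ← Units.val_mul, inv_mul_cancel, Units.val_one]
        have h2 := congrFun (congrFun h1 kk) kk
        rwa [Matrix.mul_apply, Matrix.one_apply_eq] at h2
      obtain ⟨t₀, ht₀0, hu₀⟩ :=
        key_unit (fun i => a i kk) kk (fun i => ((A⁻¹ : Mnˣ) : Mn) kk i) hcol
      set t : Fin m → R := fun i => if i.val ≤ k then 0 else t₀ i with htdef
      have htkk : t kk = 0 := if_pos le_rfl
      have htsmall : ∀ i : Fin m, i.val ≤ k → t i = 0 := fun i hi => if_pos hi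
      have hts : ∑ i, t i * a i kk = ∑ i, t₀ i * a i kk := by
        refine Finset.sum_congr rfl fun i _ => ?_
        by_cases hik : i.val ≤ k
        · rcases eq_or_lt_of_le hik with he | hl
          · have hikk : i = kk := Fin.ext (by rw [hkkv]; exact he)
            rw [hikk, htkk, ht₀0]
          · have hz : a i kk = 0 := by
              have := hApat i kk (Or.inl hl)
              rwa [Matrix.one_apply_ne (hlt_ne i hl)] at this
            rw [hz, mul_zero, mul_zero]
        · rw [htdef]
          simp [hik]
      set u : R := a kk kk + ∑ i, t i * a i kk with hudef
      have hu : IsUnit u := by rw [hudef, hts]; exact hu₀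
      -- Step 1: row operation making the pivot a unit
      obtain ⟨U, hUG, hUval⟩ := row_prod_mem G hGt kk Finset.univ t htkk
        (fun i hi => absurd (Finset.mem_univ i) hi)
      set B : Mn := (U : Mn) * a with hBdef
      have hBapp : ∀ p q, B p q = a p q + if p = kk then ∑ x, t x * a x q else 0 := by
        intro p q
        rw [hBdef, hUval, Matrix.add_mul, Matrix.one_mul, Matrix.add_apply, Matrix.mul_apply]
        congr 1
        by_cases hp : p = kk
        · rw [if_pos hp]
          exact Finset.sum_congr rfl fun x _ => by rw [rowSum_apply, if_pos hp]
        · rw [if_neg hp]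
          exact Finset.sum_eq_zero fun x _ => by rw [rowSum_apply, if_neg hp, zero_mul]
      have hBpat : ∀ p q : Fin m, (p.val < k ∨ q.val < k) → B p q = (1 : Mn) p q := by
        intro p q hpq
        rcases hpq with hp | hq
        · have hpkk : p ≠ kk := hlt_ne p hp
          rw [hBapp, if_neg hpkk, add_zero]
          exact hApat p q (Or.inl hp)
        · by_cases hp : p = kk
          · subst hp
            have hkkq : kk ≠ q := Ne.symm (hlt_ne q hq)
            have h1 : a kk q = 0 := by
              have := hApat kk q (Or.inr hq)
              rwa [Matrix.one_apply_ne hkkq] at this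
            have h2 : ∑ x, t x * a x q = 0 := by
              refine Finset.sum_eq_zero fun x _ => ?_
              by_cases hx : x.val ≤ k
              · rw [htsmall x hx, zero_mul]
              · have hxq : x ≠ q := fun e => by rw [e] at hx; exact hx (le_of_lt hq)
                have := hApat x q (Or.inr hq)
                rw [Matrix.one_apply_ne hxq] at this
                rw [this, mul_zero]
            rw [hBapp, if_pos rfl, h1, h2, zero_add, Matrix.one_apply_ne hkkq]
          · rw [hBapp, if_neg hp, add_zero]
            exact hApat p q (Or.inr hq)
      have hBkk : B kk kk = u := by rw [hBapp, if_pos rfl, hudef]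
      -- Step 2: dilation making the pivot 1
      set dv : Fin m → R := Function.update (fun _ => (1 : R)) kk ((hu.unit⁻¹ : Rˣ) : R)
        with hdv
      set dv' : Fin m → R := Function.update (fun _ => (1 : R)) kk ((hu.unit : Rˣ) : R)
        with hdv'
      have hdvdv' : ∀ x, dv x * dv' x = 1 := by
        intro x
        by_cases hx : x = kk
        · subst hx
          rw [hdv, hdv', Function.update_self, Function.update_self, Units.inv_mul]
        · rw [hdv, hdv', Function.update_of_ne hx, Function.update_of_ne hx, one_mul]
      set D : Mnˣ := ⟨Matrix.diagonal dv, Matrix.diagonal dv',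
        by rw [Matrix.diagonal_mul_diagonal,
             show (fun i => dv i * dv' i) = fun _ : Fin m => (1 : R) from
               funext fun x => hdvdv' x, Matrix.diagonal_one],
        by rw [Matrix.diagonal_mul_diagonal,
             show (fun i => dv' i * dv i) = fun _ : Fin m => (1 : R) from
               funext fun x => (mul_comm (dv x) (dv' x)) ▸ hdvdv' x, Matrix.diagonal_one]⟩
        with hD
      have hDG : D ∈ G := Subgroup.subset_closure (Or.inr ⟨kk, hu.unit⁻¹, rfl⟩)
      set C : Mn := (D : Mn) * B with hCdef
      have hCapp : ∀ p q, C p q = dv p * B p q := fun p q => Matrix.diagonal_mul dv B p q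
      have hdvne : ∀ p : Fin m, p ≠ kk → dv p = 1 :=
        fun p hp => by rw [hdv, Function.update_of_ne hp]
      have hCkk : C kk kk = 1 := by
        rw [hCapp, hBkk, hdv, Function.update_self]
        exact hu.val_inv_mul
      have hCpat : ∀ p q : Fin m, (p.val < k ∨ q.val < k) → C p q = (1 : Mn) p q := by
        intro p q hpq
        by_cases hp : p = kk
        · subst hp
          rcases hpq with hp' | hq
          · rw [hkkv] at hp'; omega
          · have hkkq : kk ≠ q := Ne.symm (hlt_ne q hq)
            have : B kk q = 0 := by
              rw [hBpat kk q (Or.inr hq), Matrix.one_apply_ne hkkq]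
            rw [hCapp, this, mul_zero, Matrix.one_apply_ne hkkq]
        · rw [hCapp, hdvne p hp, one_mul]
          exact hBpat p q hpq
      -- Step 3: clear the column below/above the pivot
      set s' : Fin m → R := fun i => if i = kk then 0 else -(C i kk) with hs'
      have hs'kk : s' kk = 0 := if_pos rfl
      obtain ⟨V, hVG, hVval⟩ := col_prod_mem G hGt kk Finset.univ s' hs'kk
        (fun i hi => absurd (Finset.mem_univ i) hi)
      set E : Mn := (V : Mn) * C with hEdef
      have hEapp : ∀ p q, E p q = C p q + s' p * C kk q := by
        intro p q
        rw [hEdef, hVval, Matrix.add_mul, Matrix.one_mul, Matrix.add_apply, Matrix.mul_apply]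
        congr 1
        have : ∀ x, (∑ i, Matrix.single i kk (s' i)) p x * C x q
            = if x = kk then s' p * C x q else 0 := by
          intro x
          rw [colSum_apply]
          by_cases hx : x = kk
          · rw [if_pos hx, if_pos hx]
          · rw [if_neg hx, if_neg hx, zero_mul]
        rw [Finset.sum_congr rfl fun x _ => this x, Finset.sum_ite_eq' Finset.univ kk
          (fun x => s' p * C x q)]
        rw [if_pos (Finset.mem_univ kk)]
      have hEcol : ∀ p, E p kk = if p = kk then 1 else 0 := by
        intro p
        by_cases hp : p = kk
        · subst hp
          rw [hEapp, hs'kk, zero_mul, add_zero, hCkk, if_pos rfl]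
        · have hsp : s' p = -(C p kk) := if_neg hp
          rw [hEapp, hCkk, mul_one, hsp, add_neg_cancel, if_neg hp]
      have hErow : ∀ q, E kk q = C kk q := by
        intro q
        rw [hEapp, hs'kk, zero_mul, add_zero]
      have hEpat : ∀ p q : Fin m, (p.val < k ∨ q.val < k) → E p q = (1 : Mn) p q := by
        intro p q hpq
        rcases hpq with hp | hq
        · have hpkk : p ≠ kk := hlt_ne p hp
          have hCpkk : C p kk = 0 := by
            rw [hCpat p kk (Or.inl hp), Matrix.one_apply_ne hpkk]
          have hsp : s' p = -(C p kk) := if_neg hpkk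
          rw [hEapp, hsp, hCpkk, neg_zero, zero_mul, add_zero]
          exact hCpat p q (Or.inl hp)
        · have hkkq : kk ≠ q := Ne.symm (hlt_ne q hq)
          have hCkkq : C kk q = 0 := by
            rw [hCpat kk q (Or.inr hq), Matrix.one_apply_ne hkkq]
          rw [hEapp, hCkkq, mul_zero, add_zero]
          exact hCpat p q (Or.inr hq)
      -- Step 4: clear the row to the right of the pivot
      set r : Fin m → R := fun j => if j = kk then 0 else -(E kk j) with hr
      have hrkk : r kk = 0 := if_pos rfl
      obtain ⟨W, hWG, hWval⟩ := row_prod_mem G hGt kk Finset.univ r hrkk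
        (fun i hi => absurd (Finset.mem_univ i) hi)
      set F : Mn := E * (W : Mn) with hFdef
      have hFapp : ∀ p q, F p q = E p q + E p kk * r q := by
        intro p q
        rw [hFdef, hWval, Matrix.mul_add, Matrix.mul_one, Matrix.add_apply, Matrix.mul_apply]
        congr 1
        have : ∀ x, E p x * (∑ i, Matrix.single kk i (r i)) x q
            = if x = kk then E p x * r q else 0 := by
          intro x
          rw [rowSum_apply]
          by_cases hx : x = kk
          · rw [if_pos hx, if_pos hx]
          · rw [if_neg hx, if_neg hx, mul_zero]
        rw [Finset.sum_congr rfl fun x _ => this x, Finset.sum_ite_eq' Finset.univ kk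
          (fun x => E p x * r q)]
        rw [if_pos (Finset.mem_univ kk)]
      have hEkkkk : E kk kk = 1 := by rw [hEcol kk, if_pos rfl]
      have hFpat : ∀ p q : Fin m, (p.val < k + 1 ∨ q.val < k + 1) → F p q = (1 : Mn) p q := by
        intro p q hpq
        by_cases hp : p = kk
        · subst hp
          rw [hFapp, hEkkkk, one_mul]
          by_cases hq : q = kk
          · subst hq
            rw [hrkk, add_zero, hEkkkk, Matrix.one_apply_eq]
          · have hrq : r q = -(E kk q) := if_neg hq
            rw [hrq, add_neg_cancel, Matrix.one_apply_ne (fun e => hq e.symm)]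
        · have hEpkk : E p kk = 0 := by rw [hEcol p, if_neg hp]
          rw [hFapp, hEpkk, zero_mul, add_zero]
          rcases hpq with hp' | hq'
          · have : p.val < k := by
              rcases Nat.lt_succ_iff_lt_or_eq.mp hp' with h | h
              · exact h
              · exact absurd (Fin.ext (by rw [hkkv]; exact h) : p = kk) hp
            exact hEpat p q (Or.inl this)
          · by_cases hq : q = kk
            · subst hq
              rw [hEpkk, Matrix.one_apply_ne hp]
            · have : q.val < k := by
                rcases Nat.lt_succ_iff_lt_or_eq.mp hq' with h | h
                · exact h
                · exact absurd (Fin.ext (by rw [hkkv]; exact h) : q = kk) hq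
              exact hEpat p q (Or.inr this)
      -- assemble
      set Fu : Mnˣ := V * (D * (U * A)) * W with hFu
      have hFuval : (Fu : Mn) = F := by
        rw [hFu, hFdef, hEdef, hCdef, hBdef, haA]
        simp only [Units.val_mul]
      have hFuG : Fu ∈ G := by
        refine IH Fu fun p q h => ?_
        rw [hFuval]
        exact hFpat p q (by omega)
      have hAeq : A = U⁻¹ * (D⁻¹ * (V⁻¹ * (Fu * W⁻¹))) := by
        rw [hFu]; group
      rw [hAeq]
      exact mul_mem (inv_mem hUG) (mul_mem (inv_mem hDG)
        (mul_mem (inv_mem hVG) (mul_mem hFuG (inv_mem hWG))))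
  intro A _
  exact main m A fun p q h => absurd h (by omega)
end

section
/- Let ψ : M_m(R_{q,s}) → R_m be the inverse of the F_q-algebra isomorphism φ determined by a normal basis B = {α^{q^j}} of F_{q^m}/F_q with dual basis {u^{q^j}}. For c(x) = Σ_{i=0}^{s−1} c_i x^i ∈ R_{q,s} and j,k ∈ {1,…,m}, the image of the matrix c(x)·E_{jk} under ψ is the linearized polynomial Σ_{i=0}^{s−1} Σ_{r=0}^{m−1} c_i (α^{q^j} u^{q^{k+r}}) X^{q^{mi+r}}. -/
/-- For a finite field extension `Fqm/Fq` with `|Fq| = q`, `|Fqm| = q^m`, the trace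
(embedded back into `Fqm`) is the sum of the Frobenius powers `y ↦ y^{q^r}`, `r < m`. -/
lemma trace_eq_sum_frob {Fq Fqm : Type*} [Field Fq] [Field Fqm] [Fintype Fq] [Fintype Fqm]
    [Algebra Fq Fqm] {q m : ℕ} (hm : 0 < m) (hq : Fintype.card Fq = q)
    (hqm : Fintype.card Fqm = q ^ m) (y : Fqm) :
    algebraMap Fq Fqm (Algebra.trace Fq Fqm y) = ∑ r : Fin m, y ^ q ^ (r : ℕ) := by
  classical
  have hq2 : 2 ≤ q := hq ▸ Fintype.one_lt_card
  obtain ⟨p, hp⟩ := CharP.exists Fq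
  haveI : CharP Fq p := hp
  obtain ⟨n, hpprime, hcard⟩ := FiniteField.card Fq p
  haveI : Fact p.Prime := ⟨hpprime⟩
  haveI : CharP Fqm p := charP_of_injective_algebraMap' Fq (A := Fqm) p
  -- the Frobenius `x ↦ x^q` as an `Fq`-algebra automorphism of `Fqm`
  have hqpn : q = p ^ (n : ℕ) := by rw [← hq, hcard]
  let F : Fqm →ₐ[Fq] Fqm :=
    { toRingHom := iterateFrobenius Fqm p n
      commutes' := fun c => by
        have : (algebraMap Fq Fqm c) ^ q = algebraMap Fq Fqm c := by
          rw [← map_pow]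
          congr 1
          rw [← hq]
          exact FiniteField.pow_card c
        simpa [iterateFrobenius_def, ← hqpn] using this }
  have hF : ∀ x : Fqm, F x = x ^ q := fun x => by
    simp [F, iterateFrobenius_def, ← hqpn]
  have hFinj : Function.Injective F := F.toRingHom.injective
  let σ : Fqm ≃ₐ[Fq] Fqm :=
    AlgEquiv.ofBijective F ((Finite.injective_iff_bijective).mp hFinj)
  have hσ : ∀ x : Fqm, σ x = x ^ q := hF
  have hσpow : ∀ (r : ℕ) (x : Fqm), (σ ^ r) x = x ^ q ^ r := by
    intro r
    induction r with
    | zero => intro x; simp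
    | succ r ih =>
      intro x
      have : (σ ^ (r + 1)) x = (σ ^ r) (σ x) := by
        rw [pow_succ]; rfl
      rw [this, hσ, ih, ← pow_mul, ← pow_succ']
  -- finrank = m
  haveI : FiniteDimensional Fq Fqm := Module.Finite.of_basis (IsNoetherian.finsetBasis Fq Fqm)
  have hrank : Module.finrank Fq Fqm = m := by
    have h1 : Fintype.card Fqm = Fintype.card Fq ^ Module.finrank Fq Fqm :=
      Module.card_eq_pow_finrank
    rw [hqm, hq] at h1
    exact (Nat.pow_right_injective hq2 h1).symm
  -- the map r ↦ σ^r is a bijection Fin m → Gal(Fqm/Fq)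
  have hinj : Function.Injective (fun r : Fin m => σ ^ (r : ℕ)) := by
    intro r r' hrr'
    by_contra hne
    -- wlog r < r'
    wlog hlt : (r : ℕ) < (r' : ℕ) generalizing r r'
    · exact this hrr'.symm (Ne.symm hne)
        (lt_of_le_of_ne (not_lt.mp hlt) (Fin.val_ne_of_ne (Ne.symm hne)))
    · have hd : σ ^ ((r' : ℕ) - (r : ℕ)) = 1 := by
        have := mul_right_cancel (a := σ ^ ((r' : ℕ) - (r : ℕ))) (b := σ ^ (r : ℕ)) (c := 1)
        apply this
        rw [one_mul, ← pow_add]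
        rw [Nat.sub_add_cancel hlt.le]
        exact hrr'.symm
      obtain ⟨d, hd0, hdm, hd⟩ : ∃ d, 0 < d ∧ d < m ∧ σ ^ d = 1 :=
        ⟨(r' : ℕ) - (r : ℕ), by omega, by omega, hd⟩
      -- every element satisfies x^{q^d} = x
      have hfix : ∀ x : Fqm, x ^ q ^ d = x := by
        intro x
        have := congrArg (fun g : Fqm ≃ₐ[Fq] Fqm => g x) hd
        simpa [hσpow] using this
      -- contradiction via a generator of the (cyclic) unit group
      obtain ⟨g, hg⟩ := IsCyclic.exists_generator (α := Fqmˣ)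
      have horder : orderOf g = q ^ m - 1 := by
        rw [orderOf_eq_card_of_forall_mem_zpowers hg, Nat.card_eq_fintype_card,
          Fintype.card_units, hqm]
      have hgfix : (g : Fqm) ^ q ^ d = (g : Fqm) := hfix g
      have hgu : g ^ (q ^ d - 1) = 1 := by
        have h1 : g ^ (q ^ d) = g := Units.ext (by
          push_cast
          exact hgfix)
        have : g ^ (q ^ d - 1) * g = g := by
          rw [← pow_succ]
          rw [Nat.sub_add_cancel (Nat.one_le_pow _ _ (by omega))]
          exact h1
        exact mul_right_cancel (by rw [this, one_mul])
      have hdvd : orderOf g ∣ q ^ d - 1 := orderOf_dvd_of_pow_eq_one hgu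
      have h2d : 2 ≤ q ^ d := le_trans hq2 (Nat.le_self_pow hd0.ne' q)
      have h2m : 2 ≤ q ^ m := le_trans hq2 (Nat.le_self_pow hm.ne' q)
      have hle : q ^ m - 1 ≤ q ^ d - 1 := by
        rw [← horder]
        exact Nat.le_of_dvd (by omega) hdvd
      have hlt2 : q ^ d < q ^ m := Nat.pow_lt_pow_right (by omega) hdm
      have hle2 : q ^ m ≤ q ^ d := by
        have h := Nat.add_le_add_right hle 1
        rwa [Nat.sub_add_cancel (by omega), Nat.sub_add_cancel (by omega)] at h
      exact absurd hle2 (not_le.mpr hlt2)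
  have hcardaut : Fintype.card (Fqm ≃ₐ[Fq] Fqm) = m := by
    rw [← Nat.card_eq_fintype_card, IsGalois.card_aut_eq_finrank, hrank]
  have hbij : Function.Bijective (fun r : Fin m => σ ^ (r : ℕ)) := by
    rw [Fintype.bijective_iff_injective_and_card]
    exact ⟨hinj, by simp [hcardaut]⟩
  rw [trace_eq_sum_automorphisms]
  rw [← Function.Bijective.sum_comp hbij (fun g => g y)]
  exact Finset.sum_congr rfl fun r _ => hσpow r y

/-- The image of `c(x)·E_{jk}` under `ψ = φ⁻¹` is the linearized polynomial
`Σ_i Σ_r c_i (α^{q^j} u^{q^{k+r}}) X^{q^{mi+r}}`.  Since `φ(g) = Σ_i [g_i]_B x^i` for the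
decomposition `g = Σ_i g_i(X^{q^{mi}})`, this is equivalent to saying that for each `i`,
the `F_q`-linear map `x ↦ Σ_r c_i (α^{q^j} u^{q^{k+r}}) x^{q^r}` on `F_{q^m}` has matrix
`c_i · E_{jk}` with respect to the normal basis `B = {α^{q^r}}` (with dual basis `{u^{q^r}}`). -/
theorem stmt6 (q m s : ℕ) (hm : 0 < m) (hs : 0 < s)
    (Fq Fqm : Type*) [Field Fq] [Field Fqm] [Fintype Fq] [Fintype Fqm] [Algebra Fq Fqm]
    (hq : Fintype.card Fq = q) (hqm : Fintype.card Fqm = q ^ m)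
    (α u : Fqm)
    (b : Module.Basis (Fin m) Fq Fqm) (hb : ∀ i : Fin m, b i = α ^ q ^ (i : ℕ))
    (hdual : ∀ i j : Fin m,
      Algebra.trace Fq Fqm (α ^ q ^ (i : ℕ) * u ^ q ^ (j : ℕ)) = if i = j then 1 else 0)
    (c : Fin s → Fq) (j k : Fin m) :
    ∀ (i : Fin s) (f : Fqm →ₗ[Fq] Fqm),
      (∀ x : Fqm, f x = ∑ r : Fin m,
          algebraMap Fq Fqm (c i) * (α ^ q ^ (j : ℕ) * u ^ q ^ ((k : ℕ) + (r : ℕ)))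
            * x ^ q ^ (r : ℕ)) →
      LinearMap.toMatrix b b f = Matrix.single j k (c i) := by
  intro i f hf
  have hft : ∀ t : Fin m, f (b t) = (if t = k then c i else 0) • b j := by
    intro t
    rw [hf (b t), hb t]
    have hterm : ∀ r : Fin m,
        algebraMap Fq Fqm (c i) * (α ^ q ^ (j : ℕ) * u ^ q ^ ((k : ℕ) + (r : ℕ)))
          * (α ^ q ^ (t : ℕ)) ^ q ^ (r : ℕ)
        = algebraMap Fq Fqm (c i) * α ^ q ^ (j : ℕ)
          * (α ^ q ^ (t : ℕ) * u ^ q ^ (k : ℕ)) ^ q ^ (r : ℕ) := by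
      intro r
      rw [mul_pow, ← pow_mul, ← pow_mul, ← pow_add]
      ring
    rw [Finset.sum_congr rfl fun r _ => hterm r, ← Finset.mul_sum,
      ← trace_eq_sum_frob hm hq hqm, hdual t k, hb j, Algebra.smul_def]
    by_cases htk : t = k
    · simp [htk]
    · simp [htk]
  ext r t
  rw [LinearMap.toMatrix_apply, hft t]
  by_cases htk : t = k
  · subst htk
    simp [Matrix.single, Finsupp.single_apply, eq_comm]
  · simp [htk, Matrix.single, Ne.symm htk]
end

section
/- With x^s − 1 = Π_{j=1}^t f_j^{s_j} (distinct irreducibles, d_j = deg f_j), the order of GL_m(F_q[x]/⟨x^s−1⟩) equals q^{m²s} · Π_{j=1}^t Π_{i=1}^m (1 − q^{−i·d_j}). -/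
open Function

lemma isUnit_of_isUnit_mul {A : Type*} [Ring A] {a b : A}
    (hab : IsUnit (a * b)) (hba : IsUnit (b * a)) : IsUnit a := by
  obtain ⟨u, hu⟩ := hab
  obtain ⟨v, hv⟩ := hba
  refine ⟨⟨a, b * ↑u⁻¹, ?_, ?_⟩, rfl⟩
  · rw [← mul_assoc, ← hu, Units.mul_inv]
  · have h1 : (↑v⁻¹ * b) * a = 1 := by
      rw [mul_assoc, ← hv, Units.inv_mul]
    have h3 : b * ↑u⁻¹ = ↑v⁻¹ * b := by
      calc b * ↑u⁻¹ = ((↑v⁻¹ * b) * a) * (b * ↑u⁻¹) := by rw [h1, one_mul]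
        _ = (↑v⁻¹ * b) * ((a * b) * ↑u⁻¹) := by simp only [mul_assoc]
        _ = ↑v⁻¹ * b := by rw [← hu, Units.mul_inv, mul_one]
    rw [h3, mul_assoc, ← hv, Units.inv_mul]

lemma card_units_of_surjective {A B : Type*} [Ring A] [Ring B] [Finite A]
    (π : A →+* B) (hs : Function.Surjective π)
    (hnil : ∀ a : A, π a = 0 → IsNilpotent a) :
    Nat.card Aˣ = Nat.card {a : A // π a = 0} * Nat.card Bˣ := by
  have hB : Finite B := Finite.of_surjective π hs
  set φ : Aˣ →* Bˣ := Units.map (π : A →* B) with hφ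
  have hφs : Function.Surjective φ := by
    intro v
    obtain ⟨a, ha⟩ := hs ↑v
    obtain ⟨b, hb⟩ := hs ↑v⁻¹
    have h1 : π (a * b - 1) = 0 := by simp [map_mul, ha, hb]
    have h2 : π (b * a - 1) = 0 := by simp [map_mul, ha, hb]
    have hab : IsUnit (a * b) := by
      have := (hnil _ h1).isUnit_one_add
      simpa [add_comm] using this
    have hba : IsUnit (b * a) := by
      have := (hnil _ h2).isUnit_one_add
      simpa [add_comm] using this
    obtain ⟨u, hu⟩ := isUnit_of_isUnit_mul hab hba
    exact ⟨u, Units.ext (by simp [φ, hu, ha])⟩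
  have e : φ.ker ≃ {a : A // π a = 0} :=
    { toFun := fun u => ⟨((u : Aˣ) : A) - 1, by
        have h := MonoidHom.mem_ker.mp u.2
        have h2 : π ((u : Aˣ) : A) = 1 := congrArg Units.val h
        simp [map_sub, h2]⟩
      invFun := fun n => ⟨((hnil n.1 n.2).isUnit_one_add).unit, by
        rw [MonoidHom.mem_ker]
        apply Units.ext
        simp [φ, n.2]⟩
      left_inv := fun u => by
        apply Subtype.ext; apply Units.ext; simp
      right_inv := fun n => by
        apply Subtype.ext; simp }
  calc Nat.card Aˣ = Nat.card (Aˣ ⧸ φ.ker) * Nat.card φ.ker :=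
        Subgroup.card_eq_card_quotient_mul_card_subgroup _
    _ = Nat.card Bˣ * Nat.card {a : A // π a = 0} := by
        rw [Nat.card_congr (QuotientGroup.quotientKerEquivOfSurjective φ hφs).toEquiv,
          Nat.card_congr e]
    _ = _ := mul_comm _ _

open Polynomial

/-- Matrices over a product ring are the product of matrix rings. -/
def matrixPiEquiv (n : Type*) [Fintype n] {ι : Type*} (R : ι → Type*)
    [∀ i, Ring (R i)] : Matrix n n (∀ i, R i) ≃+* ∀ i, Matrix n n (R i) where
  toFun M i := M.map (fun r => r i)
  invFun N := Matrix.of fun a b i => N i a b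
  left_inv M := rfl
  right_inv N := rfl
  map_add' M N := by
    funext i a b
    simp [Matrix.map_apply]
  map_mul' M N := by
    funext i a b
    simp [Matrix.map_apply, Matrix.mul_apply, Finset.sum_apply]

lemma card_ker_mapMatrix {A B : Type*} [Ring A] [Ring B] (π : A →+* B) (m : ℕ) :
    Nat.card {M : Matrix (Fin m) (Fin m) A // π.mapMatrix M = 0}
      = Nat.card {a : A // π a = 0} ^ (m * m) := by
  have e : {M : Matrix (Fin m) (Fin m) A // π.mapMatrix M = 0}
      ≃ (Fin m → Fin m → {a : A // π a = 0}) :=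
    { toFun := fun M i j => ⟨M.1 i j, by
        have h : (π.mapMatrix M.1) i j = (0 : Matrix (Fin m) (Fin m) B) i j := by rw [M.2]
        simpa [RingHom.mapMatrix_apply, Matrix.map_apply] using h⟩
      invFun := fun g => ⟨Matrix.of fun i j => (g i j).1, by
        ext i j
        simpa [RingHom.mapMatrix_apply, Matrix.map_apply] using (g i j).2⟩
      left_inv := fun M => rfl
      right_inv := fun g => rfl }
  rw [Nat.card_congr e, Nat.card_fun, Nat.card_fun, Nat.card_eq_fintype_card (α := Fin m),
    Fintype.card_fin, ← pow_mul, mul_comm]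

lemma matrix_isNilpotent {R : Type*} [CommRing R] {n : Type*} [Fintype n] [DecidableEq n]
    {J : Ideal R} {e : ℕ} (hJ : J ^ e = ⊥) (M : Matrix n n R)
    (hM : ∀ i j, M i j ∈ J) : IsNilpotent M := by
  refine ⟨e, ?_⟩
  have key : ∀ k, ∀ i j, (M ^ k) i j ∈ J ^ k := by
    intro k
    induction k with
    | zero => intro i j; simp [Ideal.one_eq_top]
    | succ k ih =>
        intro i j
        rw [pow_succ M k, Matrix.mul_apply, pow_succ J k]
        exact Submodule.sum_mem _ fun l _ => Ideal.mul_mem_mul (ih i l) (hM l j)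
  ext i j
  have := key e i j
  rw [hJ] at this
  simpa using this

lemma card_polyQuot {Fq : Type*} [Field Fq] [Fintype Fq] (g : Polynomial Fq) (hg : g ≠ 0) :
    Nat.card (Polynomial Fq ⧸ Ideal.span {g}) = Fintype.card Fq ^ g.natDegree := by
  have b : Module.Basis (Fin g.natDegree) Fq (AdjoinRoot g) := AdjoinRoot.powerBasisAux hg
  calc Nat.card (Polynomial Fq ⧸ Ideal.span {g})
      = Nat.card (Fin g.natDegree → Fq) := Nat.card_congr b.equivFun.toEquiv
    _ = Fintype.card Fq ^ g.natDegree := by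
        rw [Nat.card_fun, Nat.card_eq_fintype_card, Nat.card_eq_fintype_card, Fintype.card_fin]

lemma finite_polyQuot {Fq : Type*} [Field Fq] [Fintype Fq] (g : Polynomial Fq) (hg : g ≠ 0) :
    Finite (Polynomial Fq ⧸ Ideal.span {g}) := by
  have b : Module.Basis (Fin g.natDegree) Fq (AdjoinRoot g) := AdjoinRoot.powerBasisAux hg
  exact Finite.of_equiv _ b.equivFun.toEquiv.symm
set_option synthInstance.maxHeartbeats 1000000 in
set_option maxHeartbeats 1000000 in
open Polynomial in
lemma card_units_matrix_local {Fq : Type*} [Field Fq] [Fintype Fq]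
    (g : Polynomial Fq) (hirr : Irreducible g) (e m : ℕ) (he : 0 < e) :
    Nat.card (Matrix (Fin m) (Fin m) (Polynomial Fq ⧸ Ideal.span {g ^ e}))ˣ
      = Fintype.card Fq ^ (g.natDegree * (e - 1) * (m * m)) *
        ∏ i : Fin m, (Fintype.card Fq ^ (g.natDegree * m)
          - Fintype.card Fq ^ (g.natDegree * (i : ℕ))) := by
  set q := Fintype.card Fq
  set d := g.natDegree with hd
  have hg0 : g ≠ 0 := hirr.ne_zero
  have hge0 : g ^ e ≠ 0 := pow_ne_zero _ hg0
  set A := Polynomial Fq ⧸ Ideal.span {g ^ e} with hA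
  set B := Polynomial Fq ⧸ Ideal.span {g} with hB
  have hle : Ideal.span {g ^ e} ≤ (Ideal.span {g} : Ideal (Polynomial Fq)) :=
    Ideal.span_singleton_le_span_singleton.2 (dvd_pow_self g he.ne')
  set π : A →+* B := Ideal.Quotient.factor hle with hπ
  have hπmk : ∀ p : Polynomial Fq, π (Ideal.Quotient.mk _ p) = Ideal.Quotient.mk _ p :=
    fun p => Ideal.Quotient.factor_mk hle p
  have hπs : Function.Surjective π := by
    intro b
    obtain ⟨p, rfl⟩ := Ideal.Quotient.mk_surjective b
    exact ⟨Ideal.Quotient.mk _ p, hπmk p⟩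
  have hFA : Finite A := finite_polyQuot _ hge0
  have hFB : Finite B := finite_polyQuot _ hg0
  -- the kernel ideal is nilpotent
  have hker : (RingHom.ker π) ^ e = ⊥ := by
    have h1 : RingHom.ker π = (Ideal.span {g}).map (Ideal.Quotient.mk (Ideal.span {g ^ e})) := by
      rw [hπ, Ideal.Quotient.factor_ker]
    rw [h1, ← Ideal.map_pow, Ideal.span_singleton_pow, Ideal.map_quotient_self]
  -- cardinality of A and of the kernel
  have hcardA : Nat.card A = q ^ (d * e) := by
    rw [hA, card_polyQuot _ hge0, natDegree_pow, mul_comm e d]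
  have hcardB : Nat.card B = q ^ d := card_polyQuot _ hg0
  have hcardker : Nat.card {a : A // π a = 0} = q ^ (d * (e - 1)) := by
    have e1 : {a : A // π a = 0} ≃ RingHom.ker π :=
      Equiv.subtypeEquivRight fun a => RingHom.mem_ker.symm
    have h2 : Nat.card A = Nat.card (RingHom.ker π) * Nat.card (A ⧸ RingHom.ker π) :=
      Submodule.card_eq_card_quotient_mul_card _
    have h3 : Nat.card (A ⧸ RingHom.ker π) = q ^ d := by
      rw [Nat.card_congr (RingHom.quotientKerEquivOfSurjective hπs).toEquiv, hcardB]
    have h5 : d * e = d + d * (e - 1) := by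
      cases e with
      | zero => omega
      | succ n => simp only [Nat.mul_succ, Nat.succ_sub_one]; omega
    have h4 : q ^ d * q ^ (d * (e - 1)) = q ^ d * Nat.card (RingHom.ker π) := by
      rw [← pow_add, ← h5, ← hcardA, h2, h3, mul_comm]
    rw [Nat.card_congr e1]
    exact (Nat.eq_of_mul_eq_mul_left (pow_pos Fintype.card_pos d) h4).symm
  -- B is a field of cardinality q^d
  have hmax : (Ideal.span {g}).IsMaximal := PrincipalIdealRing.isMaximal_of_irreducible hirr
  letI : Field B := Ideal.Quotient.field _
  letI : Fintype B := Fintype.ofFinite B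
  have hcardB' : Fintype.card B = q ^ d := by rw [← Nat.card_eq_fintype_card, hcardB]
  -- apply the generic counting lemma to the matrix rings
  have hnil : ∀ M : Matrix (Fin m) (Fin m) A, π.mapMatrix M = 0 → IsNilpotent M := by
    intro M hM
    refine matrix_isNilpotent hker M fun i j => ?_
    rw [RingHom.mem_ker]
    have h : (π.mapMatrix M) i j = (0 : Matrix (Fin m) (Fin m) B) i j := by rw [hM]
    simpa [RingHom.mapMatrix_apply, Matrix.map_apply] using h
  have hsm : Function.Surjective (π.mapMatrix :
      Matrix (Fin m) (Fin m) A →+* Matrix (Fin m) (Fin m) B) := by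
    intro N
    refine ⟨Matrix.of fun i j => (hπs (N i j)).choose, ?_⟩
    ext i j
    simpa [RingHom.mapMatrix_apply, Matrix.map_apply] using (hπs (N i j)).choose_spec
  rw [card_units_of_surjective _ hsm hnil, card_ker_mapMatrix, hcardker]
  have hGL : Nat.card (Matrix (Fin m) (Fin m) B)ˣ
      = ∏ i : Fin m, (q ^ (d * m) - q ^ (d * (i : ℕ))) := by
    have := Matrix.card_GL_field (𝔽 := B) m
    rw [show Nat.card (Matrix (Fin m) (Fin m) B)ˣ = Nat.card (GL (Fin m) B) from rfl, this]
    refine Finset.prod_congr rfl fun i _ => ?_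
    rw [hcardB', ← pow_mul, ← pow_mul, mul_comm d m, mul_comm d (i : ℕ)]
  rw [hGL, ← pow_mul]
def piUnits {ι : Type*} (M : ι → Type*) [∀ i, Monoid (M i)] :
    (∀ i, M i)ˣ ≃* ∀ i, (M i)ˣ where
  toFun u i := ⟨u.val i, u.inv i, congrFun u.val_inv i, congrFun u.inv_val i⟩
  invFun g := ⟨fun i => g i, fun i => ↑(g i)⁻¹,
    by funext i; exact (g i).val_inv, by funext i; exact (g i).inv_val⟩
  left_inv u := Units.ext rfl
  right_inv g := by funext i; exact Units.ext rfl
  map_mul' u v := rfl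

lemma local_factor_rat (q d e m : ℕ) (hq : 0 < q) (he : 0 < e) :
    ((q ^ (d * (e - 1) * (m * m)) * ∏ i : Fin m,
        (q ^ (d * m) - q ^ (d * (i : ℕ))) : ℕ) : ℚ)
      = (q : ℚ) ^ (m ^ 2 * (e * d)) *
        ∏ i ∈ Finset.Icc 1 m, (1 - (q : ℚ) ^ (-((i * d : ℕ) : ℤ))) := by
  have hq0 : (q : ℚ) ≠ 0 := Nat.cast_ne_zero.2 hq.ne'
  have h1 : ((∏ i : Fin m, (q ^ (d * m) - q ^ (d * (i : ℕ))) : ℕ) : ℚ)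
      = ∏ i : Fin m, ((q : ℚ) ^ (d * m) - (q : ℚ) ^ (d * (i : ℕ))) := by
    rw [Nat.cast_prod]
    refine Finset.prod_congr rfl fun i _ => ?_
    rw [Nat.cast_sub (Nat.pow_le_pow_right hq (Nat.mul_le_mul_left d i.2.le))]
    push_cast; ring
  have h2 : ∏ i : Fin m, ((q : ℚ) ^ (d * m) - (q : ℚ) ^ (d * (i : ℕ)))
      = (q : ℚ) ^ (d * m * m) *
        ∏ i ∈ Finset.Icc 1 m, (1 - (q : ℚ) ^ (-((i * d : ℕ) : ℤ))) := by
    rw [Fin.prod_univ_eq_prod_range (fun i => ((q : ℚ) ^ (d * m) - (q : ℚ) ^ (d * i))) m,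
      ← Finset.prod_range_reflect]
    have hIcc : ∏ i ∈ Finset.Icc 1 m, (1 - (q : ℚ) ^ (-((i * d : ℕ) : ℤ)))
        = ∏ k ∈ Finset.range m, (1 - (q : ℚ) ^ (-(((1 + k) * d : ℕ) : ℤ))) := by
      rw [← Finset.Ico_add_one_right_eq_Icc, Finset.prod_Ico_eq_prod_range]
      simp
    rw [hIcc]
    have hfac : ∀ k ∈ Finset.range m,
        (q : ℚ) ^ (d * m) - (q : ℚ) ^ (d * (m - 1 - k))
          = (q : ℚ) ^ (d * m) * (1 - (q : ℚ) ^ (-(((1 + k) * d : ℕ) : ℤ))) := by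
      intro k hk
      rw [Finset.mem_range] at hk
      rw [mul_sub, mul_one]
      congr 1
      have hexp : d * m = d * (m - 1 - k) + (1 + k) * d := by
        have hmk : (m - 1 - k) + (1 + k) = m := by omega
        calc d * m = d * ((m - 1 - k) + (1 + k)) := by rw [hmk]
          _ = d * (m - 1 - k) + (1 + k) * d := by ring
      rw [hexp, pow_add, mul_assoc, zpow_neg, zpow_natCast,
        mul_inv_cancel₀ (pow_ne_zero _ hq0), mul_one]
    rw [Finset.prod_congr rfl hfac, Finset.prod_mul_distrib, Finset.prod_const,
      Finset.card_range, ← pow_mul]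
  rw [Nat.cast_mul, h1, h2, Nat.cast_pow, ← mul_assoc, ← pow_add]
  congr 2
  cases e with
  | zero => exact absurd he (by simp)
  | succ n => simp only [Nat.succ_sub_one]; ring
set_option maxHeartbeats 1000000 in
set_option synthInstance.maxHeartbeats 1000000 in
open Polynomial in
/-- `|GL_m(F_q[x]/⟨x^s-1⟩)| = q^{m²s} · Π_j Π_{i=1}^m (1 - q^{-i d_j})`. -/
theorem stmt12 (q s m t : ℕ) (hs : 0 < s) (hm : 0 < m)
    (Fq : Type*) [Field Fq] [Fintype Fq] (hq : Fintype.card Fq = q)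
    (f : Fin t → Polynomial Fq) (sj : Fin t → ℕ) (d : Fin t → ℕ)
    (hirr : ∀ j, Irreducible (f j)) (hmonic : ∀ j, (f j).Monic)
    (hdist : Function.Injective f) (hsj : ∀ j, 0 < sj j)
    (hd : ∀ j, d j = (f j).natDegree)
    (hfact : Polynomial.X ^ s - 1 = ∏ j : Fin t, f j ^ sj j) :
    (Nat.card (Matrix (Fin m) (Fin m)
        (Polynomial Fq ⧸ (Ideal.span {Polynomial.X ^ s - 1} : Ideal (Polynomial Fq))))ˣ : ℚ)
      = (q : ℚ) ^ (m ^ 2 * s) *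
        ∏ j : Fin t, ∏ i ∈ Finset.Icc 1 m, (1 - (q : ℚ) ^ (-((i * d j : ℕ) : ℤ))) := by
  subst hq
  have hq1 : 0 < Fintype.card Fq := Fintype.card_pos
  -- coprimality of the factors
  have hcop : ∀ i j, i ≠ j → IsCoprime (f i ^ sj i) (f j ^ sj j) := by
    intro i j hij
    have hnd : ¬ f i ∣ f j := by
      intro hdvd
      have hassoc := (hirr i).associated_of_dvd (hirr j) hdvd
      exact hij (hdist (Polynomial.eq_of_monic_of_associated (hmonic i) (hmonic j) hassoc))
    exact ((hirr i).coprime_iff_not_dvd.2 hnd).pow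
  have heq : (Ideal.span {X ^ s - 1} : Ideal (Polynomial Fq))
      = ⨅ j, Ideal.span {f j ^ sj j} := by
    rw [hfact]
    exact (Ideal.iInf_span_singleton hcop).symm
  have hcopI : Pairwise (IsCoprime on fun j : Fin t => Ideal.span {f j ^ sj j}) :=
    fun i j hij => (Ideal.isCoprime_span_singleton_iff _ _).mpr (hcop i j hij)
  -- the CRT ring equivalence and the resulting equivalence of unit groups
  have Φ : (Polynomial Fq ⧸ (Ideal.span {X ^ s - 1} : Ideal (Polynomial Fq)))
      ≃+* ∀ j : Fin t, Polynomial Fq ⧸ Ideal.span {f j ^ sj j} :=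
    (Ideal.quotEquivOfEq heq).trans (Ideal.quotientInfRingEquivPiQuotient _ hcopI)
  have Ψ := Φ.mapMatrix (m := Fin m)
  have U := (Units.mapEquiv (Ψ.trans
    (matrixPiEquiv (Fin m) (fun j : Fin t => Polynomial Fq ⧸ Ideal.span {f j ^ sj j}))).toMulEquiv)
  have hcard : Nat.card (Matrix (Fin m) (Fin m)
      (Polynomial Fq ⧸ (Ideal.span {X ^ s - 1} : Ideal (Polynomial Fq))))ˣ
      = ∏ j : Fin t, Nat.card (Matrix (Fin m) (Fin m)
          (Polynomial Fq ⧸ Ideal.span {f j ^ sj j}))ˣ := by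
    rw [Nat.card_congr (U.trans (piUnits _)).toEquiv, Nat.card_pi]
  -- degrees sum to s
  have hdeg : s = ∑ j : Fin t, sj j * d j := by
    have h1 : (X ^ s - 1 : Polynomial Fq).natDegree = s := by
      rw [← Polynomial.C_1, Polynomial.natDegree_X_pow_sub_C]
    have h2 : (∏ j : Fin t, f j ^ sj j).natDegree = ∑ j : Fin t, sj j * d j := by
      rw [Polynomial.natDegree_prod _ _ (fun j _ => pow_ne_zero _ (hirr j).ne_zero)]
      exact Finset.sum_congr rfl fun j _ => by rw [Polynomial.natDegree_pow, hd j]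
    rw [← h1, hfact, h2]
  rw [hcard, Nat.cast_prod]
  have hlocal : ∀ j : Fin t, (Nat.card (Matrix (Fin m) (Fin m)
      (Polynomial Fq ⧸ Ideal.span {f j ^ sj j}))ˣ : ℚ)
      = (Fintype.card Fq : ℚ) ^ (m ^ 2 * (sj j * d j)) *
        ∏ i ∈ Finset.Icc 1 m, (1 - (Fintype.card Fq : ℚ) ^ (-((i * d j : ℕ) : ℤ))) := by
    intro j
    rw [card_units_matrix_local (f j) (hirr j) (sj j) m (hsj j), ← hd j,
      local_factor_rat _ _ _ _ hq1 (hsj j)]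
  rw [Finset.prod_congr rfl fun j _ => hlocal j, Finset.prod_mul_distrib,
    Finset.prod_pow_eq_pow_sum]
  congr 2
  rw [hdeg, Finset.mul_sum]
end

section
/- With x^s − 1 = Π_{j=1}^t f_j^{s_j} (distinct irreducibles, d_j = deg f_j), the order of SL_m(F_q[x]/⟨x^s−1⟩) equals q^{m²s} Π_{j=1}^t Π_{i=1}^m (1 − q^{−i d_j}) divided by Π_{j=1}^t (q^{d_j} − 1) q^{d_j(s_j−1)}. -/
open Matrix Polynomial

/-- Counting lemma: for a surjective ring hom between (finite) rings,
the preimage of a set has cardinality `card S * card (fiber over 0)`. -/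
lemma aux_card_preimage {α β : Type*} [Ring α] [Ring β] (φ : α →+* β)
    (hsurj : Function.Surjective φ) (S : Set β) :
    Nat.card (⇑φ ⁻¹' S) = Nat.card S * Nat.card (⇑φ ⁻¹' ({0} : Set β)) := by
  choose g hg using hsurj
  have e : (⇑φ ⁻¹' S) ≃ S × (⇑φ ⁻¹' ({0} : Set β)) :=
  { toFun := fun x => (⟨φ x.1, x.2⟩, ⟨x.1 - g (φ x.1), by
      simp [Set.mem_preimage, map_sub, hg]⟩)
    invFun := fun p => ⟨g p.1.1 + p.2.1, by
      have h2 : φ p.2.1 = 0 := p.2.2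
      have := p.1.2
      simp only [Set.mem_preimage, map_add, hg, h2, add_zero]
      exact this⟩
    left_inv := fun x => by
      apply Subtype.ext
      simp
    right_inv := fun p => by
      have h2 : φ p.2.1 = 0 := p.2.2
      have key : φ (g p.1.1 + p.2.1) = p.1.1 := by rw [map_add, hg, h2, add_zero]
      refine Prod.ext (Subtype.ext ?_) (Subtype.ext ?_)
      · exact key
      · simp only [key]
        abel }
  rw [Nat.card_congr e, Nat.card_prod]

/-- Units of a monoid are equivalent to the subtype of unit elements. -/
noncomputable def aux_units_equiv (M : Type*) [Monoid M] : Mˣ ≃ {x : M // IsUnit x} :=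
{ toFun := fun u => ⟨u, u.isUnit⟩
  invFun := fun x => x.2.unit
  left_inv := fun u => Units.ext u.isUnit.unit_spec
  right_inv := fun x => Subtype.ext x.2.unit_spec }

/-- Cardinality of `K[X]/(g)` for `g` monic over a finite field. -/
lemma aux_card_adjoinRoot (K : Type*) [Field K] [Fintype K] (g : Polynomial K) (hg : g.Monic) :
    Nat.card (AdjoinRoot g) = Fintype.card K ^ g.natDegree := by
  let b := AdjoinRoot.powerBasisAux' hg
  letI : Fintype (AdjoinRoot g) := Module.fintypeOfFintype b
  rw [Nat.card_eq_fintype_card, Module.card_fintype b, Fintype.card_fin]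
/-- `SL_n` transported along a ring equivalence. -/
def aux_SL_ringEquiv {n : Type*} [DecidableEq n] [Fintype n] {R S : Type*} [CommRing R]
    [CommRing S] (e : R ≃+* S) :
    Matrix.SpecialLinearGroup n R ≃ Matrix.SpecialLinearGroup n S :=
{ toFun := fun g => ⟨g.1.map e, by
    rw [show (g.1.map ⇑e) = e.mapMatrix g.1 from rfl, ← RingEquiv.map_det, g.2, _root_.map_one]⟩
  invFun := fun g => ⟨g.1.map e.symm, by
    rw [show (g.1.map ⇑e.symm) = e.symm.mapMatrix g.1 from rfl, ← RingEquiv.map_det, g.2, _root_.map_one]⟩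
  left_inv := fun g => Subtype.ext (by ext i j; simp)
  right_inv := fun g => Subtype.ext (by ext i j; simp) }

/-- `SL_n` of a product ring is the product of the `SL_n`'s. -/
def aux_SL_pi {n : Type*} [DecidableEq n] [Fintype n] {ι : Type*} (A : ι → Type*)
    [∀ i, CommRing (A i)] :
    Matrix.SpecialLinearGroup n (∀ i, A i) ≃ ∀ i, Matrix.SpecialLinearGroup n (A i) :=
{ toFun := fun g i => ⟨g.1.map (Pi.evalRingHom A i), by
    rw [← RingHom.mapMatrix_apply, ← RingHom.map_det (Pi.evalRingHom A i) g.1, g.2]; rfl⟩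
  invFun := fun h => ⟨Matrix.of fun a b => fun i => (h i).1 a b, by
    funext i
    have : (Pi.evalRingHom A i) (Matrix.det (Matrix.of fun a b => fun i => (h i).1 a b)) = 1 := by
      rw [RingHom.map_det, RingHom.mapMatrix_apply]
      have : (Matrix.of fun a b => fun i => (h i).1 a b).map (Pi.evalRingHom A i) = (h i).1 := by
        ext a b; rfl
      rw [this, (h i).2]
    exact this⟩
  left_inv := fun g => Subtype.ext (by ext a b; rfl)
  right_inv := fun h => funext fun i => Subtype.ext (by ext a b; rfl) }

/-- The key local computation: `|SL_m(K[X]/(p^n))| * |units| = q^{d(n-1)m²} * |GL_m(F_{q^d})|`. -/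
lemma aux_local {K : Type*} [Field K] [Fintype K] (m : ℕ) (hm : 0 < m)
    (p : Polynomial K) (hp : Irreducible p) (hmon : p.Monic) (n : ℕ) (hn : 0 < n) :
    Nat.card (Matrix.SpecialLinearGroup (Fin m)
        (Polynomial K ⧸ (Ideal.span {p ^ n} : Ideal (Polynomial K))))
      * ((Fintype.card K ^ p.natDegree - 1) * Fintype.card K ^ (p.natDegree * (n - 1)))
    = Fintype.card K ^ (p.natDegree * (n - 1) * m ^ 2)
      * ∏ i : Fin m, ((Fintype.card K ^ p.natDegree) ^ m
          - (Fintype.card K ^ p.natDegree) ^ (i : ℕ)) := by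
  classical
  set q := Fintype.card K with hqdef
  set d := p.natDegree with hddef
  obtain ⟨n', rfl⟩ : ∃ n', n = n' + 1 := ⟨n - 1, (Nat.succ_pred_eq_of_pos hn).symm⟩
  set A := Polynomial K ⧸ (Ideal.span {p ^ (n' + 1)} : Ideal (Polynomial K)) with hAdef
  set B := Polynomial K ⧸ (Ideal.span {p} : Ideal (Polynomial K)) with hBdef
  haveI hmax : (Ideal.span {p} : Ideal (Polynomial K)).IsMaximal :=
    PrincipalIdealRing.isMaximal_of_irreducible hp
  letI : Field B := Ideal.Quotient.field _
  have hq1 : 1 < q := Fintype.one_lt_card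
  have hq0 : 0 < q := by omega
  have hd0 : 0 < d := hp.natDegree_pos
  have hA : Nat.card A = q ^ (d * (n' + 1)) := by
    have := aux_card_adjoinRoot K (p ^ (n' + 1)) (hmon.pow (n' + 1))
    rw [Polynomial.natDegree_pow] at this
    rw [show Nat.card A = Nat.card (AdjoinRoot (p ^ (n' + 1))) from rfl, this, mul_comm]
  have hB : Nat.card B = q ^ d := by
    have := aux_card_adjoinRoot K p hmon
    rw [show Nat.card B = Nat.card (AdjoinRoot p) from rfl, this]
  haveI : Finite A := Nat.finite_of_card_ne_zero (by rw [hA]; positivity)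
  haveI : Finite B := Nat.finite_of_card_ne_zero (by rw [hB]; positivity)
  -- the reduction map
  have hle : (Ideal.span {p ^ (n' + 1)} : Ideal (Polynomial K)) ≤ Ideal.span {p} :=
    Ideal.span_singleton_le_span_singleton.mpr (dvd_pow_self p (Nat.succ_ne_zero n'))
  set φ : A →+* B := Ideal.Quotient.factor hle with hφdef
  have hφsurj : Function.Surjective φ := by
    intro b
    obtain ⟨x, rfl⟩ := Ideal.Quotient.mk_surjective b
    exact ⟨Ideal.Quotient.mk _ x, Ideal.Quotient.factor_mk hle x⟩
  have hunit : ∀ a : A, IsUnit a ↔ IsUnit (φ a) := by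
    intro a
    constructor
    · exact fun h => h.map φ
    · intro h
      obtain ⟨x, rfl⟩ := Ideal.Quotient.mk_surjective a
      rw [hφdef, Ideal.Quotient.factor_mk] at h
      have hx0 : ¬ p ∣ x := by
        intro hdvd
        rw [Ideal.Quotient.eq_zero_iff_mem.mpr (Ideal.mem_span_singleton.mpr hdvd)] at h
        exact not_isUnit_zero h
      obtain ⟨u, v, huv⟩ : IsCoprime (p ^ (n' + 1)) x :=
        IsCoprime.pow_left ((hp.coprime_iff_not_dvd).mpr hx0)
      refine IsUnit.of_mul_eq_one (Ideal.Quotient.mk _ v) ?_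
      have h1 : (Ideal.Quotient.mk (Ideal.span {p ^ (n' + 1)})) (u * p ^ (n' + 1) + v * x)
          = 1 := by rw [huv]; exact map_one _
      have hz : (Ideal.Quotient.mk (Ideal.span {p ^ (n' + 1)})) (p ^ (n' + 1)) = 0 :=
        Ideal.Quotient.eq_zero_iff_mem.mpr (Ideal.mem_span_singleton.mpr dvd_rfl)
      rw [map_add, _root_.map_mul, _root_.map_mul, hz, mul_zero, zero_add] at h1
      rw [mul_comm] at h1
      exact h1
  -- kernel cardinality
  have hker : Nat.card (⇑φ ⁻¹' ({0} : Set B)) = q ^ (d * n') := by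
    have h1 := aux_card_preimage φ hφsurj Set.univ
    rw [Set.preimage_univ, Nat.card_univ, Nat.card_univ, hA, hB] at h1
    have h2 : q ^ (d * (n' + 1)) = q ^ d * q ^ (d * n') := by
      rw [← pow_add]; ring_nf
    rw [h2] at h1
    exact (Nat.eq_of_mul_eq_mul_left (by positivity) h1.symm)
  -- matrices
  set Φ : Matrix (Fin m) (Fin m) A →+* Matrix (Fin m) (Fin m) B := φ.mapMatrix with hΦdef
  have hΦsurj : Function.Surjective Φ := by
    intro N
    refine ⟨Matrix.of fun i j => Classical.choose (hφsurj (N i j)), ?_⟩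
    ext i j
    exact Classical.choose_spec (hφsurj (N i j))
  have hΦunit : ∀ M : Matrix (Fin m) (Fin m) A, IsUnit M ↔ IsUnit (Φ M) := by
    intro M
    rw [Matrix.isUnit_iff_isUnit_det, Matrix.isUnit_iff_isUnit_det, hunit,
      RingHom.map_det]
  have hΦker : Nat.card (⇑Φ ⁻¹' ({0} : Set (Matrix (Fin m) (Fin m) B)))
      = (q ^ (d * n')) ^ (m ^ 2) := by
    have e : (⇑Φ ⁻¹' ({0} : Set (Matrix (Fin m) (Fin m) B)))
        ≃ (Fin m → Fin m → (⇑φ ⁻¹' ({0} : Set B))) :=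
    { toFun := fun M i j => ⟨M.1 i j, by
        have hM : Φ M.1 = 0 := M.2
        have : Φ M.1 i j = 0 := by rw [hM]; rfl
        exact this⟩
      invFun := fun F => ⟨Matrix.of (fun i j => (F i j).1), by
        have : Φ (Matrix.of (fun i j => (F i j).1)) = 0 := by
          ext i j
          exact (F i j).2
        exact this⟩
      left_inv := fun M => Subtype.ext (by ext i j; rfl)
      right_inv := fun F => funext fun i => funext fun j => Subtype.ext rfl }
    rw [Nat.card_congr e, Nat.card_fun, Nat.card_fun, hker, Nat.card_eq_fintype_card,
      Fintype.card_fin, ← pow_mul, sq]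
  -- GL cardinalities
  have hGLB : Nat.card (GL (Fin m) B) = ∏ i : Fin m, ((q ^ d) ^ m - (q ^ d) ^ (i : ℕ)) := by
    letI : Fintype B := Fintype.ofFinite B
    have hB' : Fintype.card B = q ^ d := by rw [← Nat.card_eq_fintype_card, hB]
    rw [Matrix.card_GL_field]
    simp [hB']
  have hGLA : Nat.card (GL (Fin m) A)
      = (∏ i : Fin m, ((q ^ d) ^ m - (q ^ d) ^ (i : ℕ))) * (q ^ (d * n')) ^ (m ^ 2) := by
    have hset : (⇑Φ ⁻¹' {N : Matrix (Fin m) (Fin m) B | IsUnit N})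
        = {M : Matrix (Fin m) (Fin m) A | IsUnit M} := by
      ext M
      simp only [Set.mem_preimage, Set.mem_setOf_eq]
      exact (hΦunit M).symm
    have h1 := aux_card_preimage Φ hΦsurj {N : Matrix (Fin m) (Fin m) B | IsUnit N}
    rw [hset, hΦker] at h1
    have h2 : Nat.card (GL (Fin m) A)
        = Nat.card ({M : Matrix (Fin m) (Fin m) A | IsUnit M}) :=
      Nat.card_congr (aux_units_equiv _)
    have h3 : Nat.card ({N : Matrix (Fin m) (Fin m) B | IsUnit N})
        = Nat.card (GL (Fin m) B) :=
      (Nat.card_congr (aux_units_equiv _)).symm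
    rw [h2, h1, h3, hGLB]
  -- units of A
  have hUA : Nat.card Aˣ = (q ^ d - 1) * q ^ (d * n') := by
    have hset : (⇑φ ⁻¹' {y : B | IsUnit y}) = {x : A | IsUnit x} := by
      ext x
      simp only [Set.mem_preimage, Set.mem_setOf_eq]
      exact (hunit x).symm
    have h1 := aux_card_preimage φ hφsurj {y : B | IsUnit y}
    rw [hset, hker] at h1
    have h2 : Nat.card Aˣ = Nat.card ({x : A | IsUnit x}) :=
      Nat.card_congr (aux_units_equiv _)
    have h3 : Nat.card ({y : B | IsUnit y}) = Nat.card Bˣ :=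
      (Nat.card_congr (aux_units_equiv _)).symm
    rw [h2, h1, h3, Nat.card_units, hB]
  -- det is surjective on GL
  have hdet_surj : Function.Surjective
      (Matrix.GeneralLinearGroup.det : GL (Fin m) A →* Aˣ) := by
    intro u
    set i0 : Fin m := ⟨0, hm⟩
    set D : Matrix (Fin m) (Fin m) A :=
      Matrix.diagonal (Function.update (fun _ => (1 : A)) i0 (u : A)) with hDdef
    have hdet : D.det = (u : A) := by
      rw [hDdef, Matrix.det_diagonal, Finset.prod_update_of_mem (Finset.mem_univ i0)]
      simp
    have hD : IsUnit D := (Matrix.isUnit_iff_isUnit_det D).mpr (hdet ▸ u.isUnit)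
    refine ⟨hD.unit, Units.ext ?_⟩
    show (hD.unit : Matrix (Fin m) (Fin m) A).det = (u : A)
    rw [IsUnit.unit_spec, hdet]
  -- SL is the kernel of det
  have hSLker : Nat.card (Matrix.SpecialLinearGroup (Fin m) A)
      = Nat.card (MonoidHom.ker (Matrix.GeneralLinearGroup.det : GL (Fin m) A →* Aˣ)) := by
    refine Nat.card_congr ⟨fun g => ⟨Matrix.SpecialLinearGroup.toGL g, ?_⟩,
      fun k => ⟨(k.1 : Matrix (Fin m) (Fin m) A), ?_⟩, fun g => Subtype.ext rfl,
      fun k => Subtype.ext (Units.ext rfl)⟩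
    · exact Matrix.SpecialLinearGroup.coeToGL_det g
    · have hk : Matrix.GeneralLinearGroup.det k.1 = 1 := k.2
      have := congrArg (Units.val) hk
      exact this
  have hGL_eq : Nat.card (GL (Fin m) A)
      = Nat.card Aˣ * Nat.card
          (MonoidHom.ker (Matrix.GeneralLinearGroup.det : GL (Fin m) A →* Aˣ)) := by
    rw [Subgroup.card_eq_card_quotient_mul_card_subgroup
      (MonoidHom.ker (Matrix.GeneralLinearGroup.det : GL (Fin m) A →* Aˣ))]
    congr 1
    exact Nat.card_congr (QuotientGroup.quotientKerEquivOfSurjective _ hdet_surj).toEquiv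
  -- put everything together
  have key : Nat.card (Matrix.SpecialLinearGroup (Fin m) A) * Nat.card Aˣ
      = (∏ i : Fin m, ((q ^ d) ^ m - (q ^ d) ^ (i : ℕ))) * (q ^ (d * n')) ^ (m ^ 2) := by
    rw [hSLker, mul_comm, ← hGL_eq, hGLA]
  rw [show n' + 1 - 1 = n' from rfl]
  calc Nat.card (Matrix.SpecialLinearGroup (Fin m) A) * ((q ^ d - 1) * q ^ (d * n'))
      = Nat.card (Matrix.SpecialLinearGroup (Fin m) A) * Nat.card Aˣ := by rw [hUA]
    _ = (∏ i : Fin m, ((q ^ d) ^ m - (q ^ d) ^ (i : ℕ))) * (q ^ (d * n')) ^ (m ^ 2) := key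
    _ = q ^ (d * n' * m ^ 2) * ∏ i : Fin m, ((q ^ d) ^ m - (q ^ d) ^ (i : ℕ)) := by
        rw [mul_comm, ← pow_mul]

/-- `∏_{i<m} (Q^m - Q^i) = q^{d m²} ∏_{i=1}^m (1 - Q^{-i})` where `Q = q^d`. -/
lemma aux_qident (q d m : ℕ) (hq : 1 < q) :
    (∏ i : Fin m, (((q : ℚ) ^ d) ^ m - ((q : ℚ) ^ d) ^ (i : ℕ)))
      = (q : ℚ) ^ (d * m ^ 2)
          * ∏ i ∈ Finset.Icc 1 m, (1 - (q : ℚ) ^ (-((i * d : ℕ) : ℤ))) := by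
  have hq0 : (q : ℚ) ≠ 0 := by
    have : (0 : ℚ) < q := by exact_mod_cast (by omega : 0 < q)
    exact this.ne'
  have h1 : (q : ℚ) ^ (d * m ^ 2) = ∏ _i ∈ Finset.Icc 1 m, (q : ℚ) ^ (d * m) := by
    rw [Finset.prod_const, Nat.card_Icc, Nat.add_sub_cancel, ← pow_mul]
    congr 1
    ring
  rw [h1, ← Finset.prod_mul_distrib]
  have h2 : ∀ i ∈ Finset.Icc 1 m,
      (q : ℚ) ^ (d * m) * (1 - (q : ℚ) ^ (-((i * d : ℕ) : ℤ)))
        = (q : ℚ) ^ (d * m) - (q : ℚ) ^ ((m - i) * d) := by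
    intro i hi
    obtain ⟨h1i, him⟩ := Finset.mem_Icc.mp hi
    rw [mul_sub, mul_one]
    congr 1
    rw [← zpow_natCast (q : ℚ) (d * m), ← zpow_add₀ hq0, ← zpow_natCast (q : ℚ) ((m - i) * d)]
    congr 1
    have hsub : (m - i) * d + i * d = d * m := by
      rw [← Nat.add_mul, Nat.sub_add_cancel him, mul_comm]
    have hz := congrArg (Nat.cast : ℕ → ℤ) hsub
    push_cast at hz ⊢
    linarith
  rw [Finset.prod_congr rfl h2]
  rw [Fin.prod_univ_eq_prod_range (fun i => ((q : ℚ) ^ d) ^ m - ((q : ℚ) ^ d) ^ i) m]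
  refine Finset.prod_nbij' (fun i => m - i) (fun j => m - j) ?_ ?_ ?_ ?_ ?_
  · intro a ha
    simp only [Finset.mem_range] at ha
    simp only [Finset.mem_Icc]
    omega
  · intro a ha
    simp only [Finset.mem_Icc] at ha
    simp only [Finset.mem_range]
    omega
  · intro a ha
    simp only [Finset.mem_range] at ha
    show m - (m - a) = a
    omega
  · intro a ha
    simp only [Finset.mem_Icc] at ha
    show m - (m - a) = a
    omega
  · intro a ha
    simp only [Finset.mem_range] at ha
    have h3 : m - (m - a) = a := by omega
    rw [h3, ← pow_mul, ← pow_mul]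
    congr 2
    ring

/-- `|SL_m(F_q[x]/⟨x^s-1⟩)| = q^{m²s} Π_j Π_{i=1}^m (1 - q^{-i d_j}) / Π_j (q^{d_j}-1) q^{d_j(s_j-1)}`. -/
theorem stmt13 (q s m t : ℕ) (hs : 0 < s) (hm : 0 < m)
    (Fq : Type*) [Field Fq] [Fintype Fq] (hq : Fintype.card Fq = q)
    (f : Fin t → Polynomial Fq) (sj : Fin t → ℕ) (d : Fin t → ℕ)
    (hirr : ∀ j, Irreducible (f j)) (hmonic : ∀ j, (f j).Monic)
    (hdist : Function.Injective f) (hsj : ∀ j, 0 < sj j)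
    (hd : ∀ j, d j = (f j).natDegree)
    (hfact : Polynomial.X ^ s - 1 = ∏ j : Fin t, f j ^ sj j) :
    (Nat.card (Matrix.SpecialLinearGroup (Fin m)
        (Polynomial Fq ⧸ (Ideal.span {Polynomial.X ^ s - 1} : Ideal (Polynomial Fq)))) : ℚ)
      = ((q : ℚ) ^ (m ^ 2 * s) *
          ∏ j : Fin t, ∏ i ∈ Finset.Icc 1 m, (1 - (q : ℚ) ^ (-((i * d j : ℕ) : ℤ)))) /
        ∏ j : Fin t, ((q : ℚ) ^ (d j) - 1) * (q : ℚ) ^ (d j * (sj j - 1)) := by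
  classical
  have hq1 : 1 < q := hq ▸ Fintype.one_lt_card
  have hq0 : (q : ℚ) ≠ 0 := by
    have : (0 : ℚ) < q := by exact_mod_cast (by omega : 0 < q)
    exact this.ne'
  have hd0 : ∀ j, 0 < d j := fun j => (hd j) ▸ (hirr j).natDegree_pos
  -- pairwise coprimality
  have hcop : ∀ i j, i ≠ j → IsCoprime (f i ^ sj i) (f j ^ sj j) := by
    intro i j hij
    have hfij : ¬ f i ∣ f j := by
      intro hdvd
      have hassoc : Associated (f i) (f j) :=
        Irreducible.associated_of_dvd (hirr i) (hirr j) hdvd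
      exact hij (hdist (Polynomial.eq_of_monic_of_associated (hmonic i) (hmonic j) hassoc))
    exact (((hirr i).coprime_iff_not_dvd).mpr hfij).pow
  have hcopI : Pairwise (Function.onFun IsCoprime
      fun j => (Ideal.span {f j ^ sj j} : Ideal (Polynomial Fq))) := by
    intro i j hij
    exact (Ideal.isCoprime_span_singleton_iff _ _).mpr (hcop i j hij)
  have hIeq : (Ideal.span {Polynomial.X ^ s - 1} : Ideal (Polynomial Fq))
      = ⨅ j, Ideal.span {f j ^ sj j} := by
    rw [hfact, Ideal.iInf_span_singleton (fun i j hij => hcop i j hij)]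
  let e := (Ideal.quotEquivOfEq hIeq).trans (Ideal.quotientInfRingEquivPiQuotient _ hcopI)
  have hcards : Nat.card (Matrix.SpecialLinearGroup (Fin m)
        (Polynomial Fq ⧸ (Ideal.span {Polynomial.X ^ s - 1} : Ideal (Polynomial Fq))))
      = ∏ j : Fin t, Nat.card (Matrix.SpecialLinearGroup (Fin m)
          (Polynomial Fq ⧸ (Ideal.span {f j ^ sj j} : Ideal (Polynomial Fq)))) := by
    rw [Nat.card_congr ((aux_SL_ringEquiv e).trans (aux_SL_pi _)), Nat.card_pi]
  -- sum of degrees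
  have hdeg : s = ∑ j, d j * sj j := by
    have h1 : (Polynomial.X ^ s - 1 : Polynomial Fq).natDegree = s := by
      rw [← Polynomial.C_1, Polynomial.natDegree_X_pow_sub_C]
    rw [hfact, Polynomial.natDegree_prod _ _
      (fun j _ => pow_ne_zero _ (hirr j).ne_zero)] at h1
    rw [← h1]
    refine Finset.sum_congr rfl fun j _ => ?_
    rw [Polynomial.natDegree_pow, hd j, mul_comm]
  -- per-factor computation
  have hnj : ∀ j : Fin t,
      ((Nat.card (Matrix.SpecialLinearGroup (Fin m)
          (Polynomial Fq ⧸ (Ideal.span {f j ^ sj j} : Ideal (Polynomial Fq))))) : ℚ)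
        = ((q : ℚ) ^ (m ^ 2 * (d j * sj j))
              * ∏ i ∈ Finset.Icc 1 m, (1 - (q : ℚ) ^ (-((i * d j : ℕ) : ℤ))))
          / (((q : ℚ) ^ (d j) - 1) * (q : ℚ) ^ (d j * (sj j - 1))) := by
    intro j
    have key := aux_local m hm (f j) (hirr j) (hmonic j) (sj j) (hsj j)
    rw [hq, ← hd j] at key
    have hqd1 : 1 ≤ q ^ (d j) := Nat.one_le_pow _ _ (by omega)
    have keyQ := congrArg (Nat.cast : ℕ → ℚ) key
    rw [Nat.cast_mul, Nat.cast_mul, Nat.cast_mul, Nat.cast_prod] at keyQ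
    rw [Nat.cast_sub hqd1] at keyQ
    have hc2 : ∀ i : Fin m, ((q ^ (d j)) ^ m - (q ^ (d j)) ^ (i : ℕ) : ℕ)
        = (((q ^ (d j)) ^ m : ℕ) - ((q ^ (d j)) ^ (i : ℕ) : ℕ)) := fun i => rfl
    have hc3 : ∀ i ∈ Finset.univ (α := Fin m),
        (((q ^ (d j)) ^ m - (q ^ (d j)) ^ (i : ℕ) : ℕ) : ℚ)
          = ((q : ℚ) ^ (d j)) ^ m - ((q : ℚ) ^ (d j)) ^ (i : ℕ) := by
      intro i _
      rw [Nat.cast_sub (Nat.pow_le_pow_right (by omega) (le_of_lt i.2))]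
      push_cast
      ring
    rw [Finset.prod_congr rfl hc3] at keyQ
    rw [aux_qident q (d j) m hq1] at keyQ
    push_cast at keyQ
    have hexp : (q : ℚ) ^ (d j * (sj j - 1) * m ^ 2) * ((q : ℚ) ^ (d j * m ^ 2))
        = (q : ℚ) ^ (m ^ 2 * (d j * sj j)) := by
      rw [← pow_add]
      congr 1
      obtain ⟨k, hk⟩ : ∃ k, sj j = k + 1 := ⟨sj j - 1, (Nat.succ_pred_eq_of_pos (hsj j)).symm⟩
      rw [hk]
      simp only [Nat.add_sub_cancel]
      ring
    have hden : ((q : ℚ) ^ (d j) - 1) * (q : ℚ) ^ (d j * (sj j - 1)) ≠ 0 := by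
      have h1 : (1 : ℚ) < (q : ℚ) ^ (d j) := by
        have : (1 : ℚ) < (q : ℚ) := by exact_mod_cast hq1
        exact one_lt_pow₀ this (hd0 j).ne'
      exact mul_ne_zero (sub_ne_zero.mpr (ne_of_gt h1)) (pow_ne_zero _ hq0)
    rw [eq_div_iff hden]
    rw [keyQ, ← mul_assoc, hexp]
    congr 1
  rw [hcards, Nat.cast_prod, Finset.prod_congr rfl (fun j _ => hnj j),
    Finset.prod_div_distrib, Finset.prod_mul_distrib]
  congr 2
  rw [Finset.prod_pow_eq_pow_sum]
  congr 1
  rw [hdeg, Finset.mul_sum]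
end
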